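/- For any η ∈ Ω_r (a configuration on ℕ with infinitely many records) and any k ∈ ℕ, the k-skip map commutes with the one-step BBS(1) evolution: Ψ_k(T_1 η) = T_1 Ψ_k(η). Moreover Ψ_k(T_∞ η) = T_∞ Ψ_k(T_k η). -/

import Mathlib

/-- Seat occupation functions 𝒲_k(η,x). -/
def seatW (η : ℕ → ℤ) : ℕ → ℕ → ℤ
  | 0, _ => 0
  | x + 1, k =>
      seatW η x k
        + η (x + 1) * (1 - seatW η x k) * (∏ m ∈ Finset.Ico 1 k, seatW η x m)
        - (1 - η (x + 1)) * seatW η x k * (∏ m ∈ Finset.Ico 1 k, (1 - seatW η x m))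

/-- Boarding indicator η↑_k(x). -/
def seatUp (η : ℕ → ℤ) (k x : ℕ) : ℤ :=
  η x * (1 - seatW η (x - 1) k) * (∏ m ∈ Finset.Ico 1 k, seatW η (x - 1) m)

/-- Alighting indicator η↓_k(x). -/
def seatDown (η : ℕ → ℤ) (k x : ℕ) : ℤ :=
  (1 - η x) * seatW η (x - 1) k * (∏ m ∈ Finset.Ico 1 k, (1 - seatW η (x - 1) m))

/-- Record indicator r(η,x). (Seat events at x have seat number ≤ x.) -/
def recordInd (η : ℕ → ℤ) (x : ℕ) : ℤ :=
  1 - ∑ k ∈ Finset.Icc 1 x, (seatUp η k x + seatDown η k x)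

/-- ξ_k(η,x). -/
def xiSeat (η : ℕ → ℤ) (k x : ℕ) : ℤ :=
  (x : ℤ) - ∑ y ∈ Finset.Icc 1 x, ∑ m ∈ Finset.Icc 1 k, (seatUp η m y + seatDown η m y)

/-- s_k(η,i). -/
noncomputable def sSeat (η : ℕ → ℤ) (k i : ℕ) : ℕ :=
  sInf {x : ℕ | xiSeat η k x = (i : ℤ)}

/-- k-skip map Ψ_k. -/
noncomputable def skip (η : ℕ → ℤ) (k : ℕ) : ℕ → ℤ := fun x => η (sSeat η k x)

/-- Slot decomposition ζ_k(η,i). -/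
noncomputable def zeta (η : ℕ → ℤ) (k i : ℕ) : ℤ :=
  ∑ y ∈ Finset.Icc (sSeat η k i + 1) (sSeat η k (i + 1)),
    (seatUp η k y - seatUp η (k + 1) y)

/-- Carrier with capacity ℓ. -/
def carrier (η : ℕ → ℤ) (ℓ : ℕ) : ℕ → ℤ
  | 0 => 0
  | x + 1 =>
      if η (x + 1) = 1 ∧ carrier η ℓ x < (ℓ : ℤ) then carrier η ℓ x + 1
      else if η (x + 1) = 0 ∧ 0 < carrier η ℓ x then carrier η ℓ x - 1
      else carrier η ℓ x

/-- Carrier with infinite capacity. -/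
def carrierInf (η : ℕ → ℤ) : ℕ → ℤ
  | 0 => 0
  | x + 1 => if η (x + 1) = 1 then carrierInf η x + 1 else max (carrierInf η x - 1) 0

/-- One-step BBS(ℓ) evolution. -/
def tEvol (η : ℕ → ℤ) (ℓ : ℕ) : ℕ → ℤ :=
  fun x => η x + carrier η ℓ (x - 1) - carrier η ℓ x

/-- One-step BBS(∞) evolution. -/
def tEvolInf (η : ℕ → ℤ) : ℕ → ℤ :=
  fun x => η x + carrierInf η (x - 1) - carrierInf η x

/-! ### S1: basics -/

def Ze (η : ℕ → ℤ) : Prop := ∀ x, η x = 0 ∨ η x = 1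

lemma seatW_succ (η : ℕ → ℤ) (x k : ℕ) :
    seatW η (x+1) k = seatW η x k + seatUp η k (x+1) - seatDown η k (x+1) := by
  simp [seatW, seatUp, seatDown]

lemma prod01 {s : Finset ℕ} {f : ℕ → ℤ} (h : ∀ m ∈ s, f m = 0 ∨ f m = 1) :
    (∏ m ∈ s, f m) = 0 ∨ (∏ m ∈ s, f m) = 1 := by
  classical
  induction s using Finset.induction_on with
  | empty => simp
  | @insert a s ha ih =>
    rw [Finset.prod_insert ha]
    rcases h a (by simp) with h1 | h1 <;>
      rcases ih (fun m hm => h m (by simp [hm])) with h2 | h2 <;> simp [h1, h2]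

lemma seatW01 {η : ℕ → ℤ} (hη : Ze η) (x : ℕ) (k : ℕ) :
    seatW η x k = 0 ∨ seatW η x k = 1 := by
  induction x generalizing k with
  | zero => left; rfl
  | succ x ih =>
    have hP := prod01 (s := Finset.Ico 1 k) (f := fun m => seatW η x m) (fun m _ => ih m)
    have hQ := prod01 (s := Finset.Ico 1 k) (f := fun m => 1 - seatW η x m)
      (fun m _ => by rcases ih m with h | h <;> simp [h])
    rw [seatW]
    rcases hη (x+1) with h1 | h1 <;> rcases ih k with h2 | h2 <;>
      rcases hP with h3 | h3 <;> rcases hQ with h4 | h4 <;>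
      simp [h1, h2, h3, h4]

lemma seatW_zero {η : ℕ → ℤ} (hη : Ze η) {x m : ℕ} (h : x < m) : seatW η x m = 0 := by
  induction x generalizing m with
  | zero => rfl
  | succ x ih =>
    have hm : x < m - 1 := by omega
    have h1 : seatW η x m = 0 := ih (by omega)
    have h2 : (∏ j ∈ Finset.Ico 1 m, seatW η x j) = 0 := by
      apply Finset.prod_eq_zero (i := m - 1) (by simp; omega) (ih hm)
    rw [seatW, h1, h2]; ring

lemma seatW_one (η : ℕ → ℤ) (x : ℕ) : seatW η (x+1) 1 = η (x+1) := by
  rw [seatW]; simp; ring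

/-- least free seat (minus one) at site-state `seatW η x ·`. -/
lemma exists_free {η : ℕ → ℤ} (hη : Ze η) (x : ℕ) : ∃ j, seatW η x (j+1) = 0 :=
  ⟨x, seatW_zero hη (by omega)⟩

noncomputable def freeSeat (η : ℕ → ℤ) (hη : Ze η) (x : ℕ) : ℕ :=
  Nat.find (exists_free hη x) + 1

lemma freeSeat_spec {η : ℕ → ℤ} (hη : Ze η) (x : ℕ) :
    seatW η x (freeSeat η hη x) = 0 := Nat.find_spec (exists_free hη x)

lemma freeSeat_min {η : ℕ → ℤ} (hη : Ze η) (x : ℕ) {j : ℕ} (h1 : 1 ≤ j)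
    (h2 : j < freeSeat η hη x) : seatW η x j = 1 := by
  have := Nat.find_min (exists_free hη x) (m := j - 1) (by unfold freeSeat at h2; omega)
  have h3 : j - 1 + 1 = j := by omega
  rw [h3] at this
  rcases seatW01 hη x j with h | h
  · exact absurd h this
  · exact h

lemma freeSeat_pos {η : ℕ → ℤ} (hη : Ze η) (x : ℕ) : 1 ≤ freeSeat η hη x := by
  unfold freeSeat; omega

lemma freeSeat_le {η : ℕ → ℤ} (hη : Ze η) (x : ℕ) : freeSeat η hη x ≤ x + 1 := by
  unfold freeSeat
  have : Nat.find (exists_free hη x) ≤ x := Nat.find_le (seatW_zero hη (by omega))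
  omega
/-! ### S1b: event sums -/

def evS (η : ℕ → ℤ) (k x : ℕ) : ℤ :=
  ∑ m ∈ Finset.Icc 1 k, (seatUp η m x + seatDown η m x)

lemma xiSeat_eq (η : ℕ → ℤ) (k x : ℕ) :
    xiSeat η k x = (x : ℤ) - ∑ y ∈ Finset.Icc 1 x, evS η k y := rfl

lemma xiSeat_succ (η : ℕ → ℤ) (k x : ℕ) :
    xiSeat η k (x+1) = xiSeat η k x + 1 - evS η k (x+1) := by
  rw [xiSeat_eq, xiSeat_eq, Finset.sum_Icc_succ_top (by omega)]
  push_cast; ring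

lemma recordInd_eq (η : ℕ → ℤ) (x : ℕ) : recordInd η x = 1 - evS η x x := rfl

noncomputable def occSeat (η : ℕ → ℤ) (x : ℕ) (h : ∃ j, seatW η x (j+1) = 1) : ℕ :=
  Nat.find h + 1

lemma occSeat_spec {η : ℕ → ℤ} {x : ℕ} (h : ∃ j, seatW η x (j+1) = 1) :
    seatW η x (occSeat η x h) = 1 := Nat.find_spec h

lemma occSeat_min {η : ℕ → ℤ} (hη : Ze η) {x : ℕ} (h : ∃ j, seatW η x (j+1) = 1)
    {j : ℕ} (h1 : 1 ≤ j) (h2 : j < occSeat η x h) : seatW η x j = 0 := by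
  have := Nat.find_min h (m := j - 1) (by unfold occSeat at h2; omega)
  have h3 : j - 1 + 1 = j := by omega
  rw [h3] at this
  rcases seatW01 hη x j with h | h
  · exact h
  · exact absurd h this

lemma occSeat_pos {η : ℕ → ℤ} {x : ℕ} (h : ∃ j, seatW η x (j+1) = 1) :
    1 ≤ occSeat η x h := by unfold occSeat; omega

lemma occSeat_le {η : ℕ → ℤ} (hη : Ze η) {x : ℕ} (h : ∃ j, seatW η x (j+1) = 1) :
    occSeat η x h ≤ x := by
  obtain ⟨j, hj⟩ := h
  have hjx : j + 1 ≤ x := by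
    by_contra hc
    rw [seatW_zero hη (by omega)] at hj; norm_num at hj
  have h2 : Nat.find (⟨j, hj⟩ : ∃ j, seatW η x (j+1) = 1) ≤ j := Nat.find_le hj
  unfold occSeat
  omega

lemma sum_up_one {η : ℕ → ℤ} (hη : Ze η) {x : ℕ} (hx : 1 ≤ x) (h1 : η x = 1) (k : ℕ) :
    (∑ m ∈ Finset.Icc 1 k, seatUp η m x)
      = if freeSeat η hη (x-1) ≤ k then 1 else 0 := by
  by_cases h : freeSeat η hη (x-1) ≤ k
  · rw [if_pos h]
    have hmem : freeSeat η hη (x-1) ∈ Finset.Icc 1 k := by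
      simp only [Finset.mem_Icc]; exact ⟨freeSeat_pos hη _, h⟩
    rw [Finset.sum_eq_single_of_mem _ hmem]
    · unfold seatUp
      have hp : (∏ m ∈ Finset.Ico 1 (freeSeat η hη (x-1)), seatW η (x-1) m) = 1 := by
        apply Finset.prod_eq_one
        intro j hj
        simp only [Finset.mem_Ico] at hj
        exact freeSeat_min hη (x-1) hj.1 hj.2
      rw [freeSeat_spec hη (x-1), h1, hp]; ring
    · intro m hm hne
      simp only [Finset.mem_Icc] at hm
      unfold seatUp
      rcases lt_or_gt_of_ne hne with hlt | hgt
      · rw [freeSeat_min hη (x-1) hm.1 hlt]; ring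
      · have hmem2 : freeSeat η hη (x-1) ∈ Finset.Ico 1 m := by
          simp only [Finset.mem_Ico]; exact ⟨freeSeat_pos hη _, hgt⟩
        rw [Finset.prod_eq_zero hmem2 (freeSeat_spec hη (x-1))]; ring
  · rw [if_neg h]
    apply Finset.sum_eq_zero
    intro m hm
    simp only [Finset.mem_Icc] at hm
    unfold seatUp
    rw [freeSeat_min hη (x-1) hm.1 (by omega)]; ring

lemma sum_up_zero {η : ℕ → ℤ} {x : ℕ} (h0 : η x = 0) (k : ℕ) :
    (∑ m ∈ Finset.Icc 1 k, seatUp η m x) = 0 := by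
  apply Finset.sum_eq_zero
  intro m _; unfold seatUp; rw [h0]; ring

lemma sum_down_one {η : ℕ → ℤ} (hη : Ze η) {x : ℕ} (h0 : η x = 0)
    (hocc : ∃ j, seatW η (x-1) (j+1) = 1) (k : ℕ) :
    (∑ m ∈ Finset.Icc 1 k, seatDown η m x)
      = if occSeat η (x-1) hocc ≤ k then 1 else 0 := by
  by_cases h : occSeat η (x-1) hocc ≤ k
  · rw [if_pos h]
    have hmem : occSeat η (x-1) hocc ∈ Finset.Icc 1 k := by
      simp only [Finset.mem_Icc]; exact ⟨occSeat_pos hocc, h⟩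
    rw [Finset.sum_eq_single_of_mem _ hmem]
    · unfold seatDown
      have hp : (∏ m ∈ Finset.Ico 1 (occSeat η (x-1) hocc), (1 - seatW η (x-1) m)) = 1 := by
        apply Finset.prod_eq_one
        intro j hj
        simp only [Finset.mem_Ico] at hj
        rw [occSeat_min hη hocc hj.1 hj.2]; ring
      rw [occSeat_spec hocc, h0, hp]; ring
    · intro m hm hne
      simp only [Finset.mem_Icc] at hm
      unfold seatDown
      rcases lt_or_gt_of_ne hne with hlt | hgt
      · rw [occSeat_min hη hocc hm.1 hlt]; ring
      · have hmem2 : occSeat η (x-1) hocc ∈ Finset.Ico 1 m := by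
          simp only [Finset.mem_Ico]; exact ⟨occSeat_pos hocc, hgt⟩
        have hz : (1 : ℤ) - seatW η (x-1) (occSeat η (x-1) hocc) = 0 := by
          rw [occSeat_spec hocc]; ring
        rw [Finset.prod_eq_zero hmem2 hz]; ring
  · rw [if_neg h]
    apply Finset.sum_eq_zero
    intro m hm
    simp only [Finset.mem_Icc] at hm
    unfold seatDown
    rw [occSeat_min hη hocc hm.1 (by omega)]; ring

lemma sum_down_nocc {η : ℕ → ℤ} {x : ℕ} (hnocc : ∀ j, seatW η (x-1) (j+1) = 0) (k : ℕ) :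
    (∑ m ∈ Finset.Icc 1 k, seatDown η m x) = 0 := by
  apply Finset.sum_eq_zero
  intro m hm
  simp only [Finset.mem_Icc] at hm
  unfold seatDown
  have h2 : seatW η (x-1) m = 0 := by
    have := hnocc (m-1); rwa [show m - 1 + 1 = m by omega] at this
  rw [h2]; ring

lemma sum_down_zero {η : ℕ → ℤ} {x : ℕ} (h1 : η x = 1) (k : ℕ) :
    (∑ m ∈ Finset.Icc 1 k, seatDown η m x) = 0 := by
  apply Finset.sum_eq_zero
  intro m _; unfold seatDown; rw [h1]; ring

lemma evS_split (η : ℕ → ℤ) (k x : ℕ) :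
    evS η k x = (∑ m ∈ Finset.Icc 1 k, seatUp η m x)
      + (∑ m ∈ Finset.Icc 1 k, seatDown η m x) := by
  unfold evS; rw [Finset.sum_add_distrib]
/-! ### S2: carrier and records -/

lemma carrierInf_succ (η : ℕ → ℤ) (x : ℕ) :
    carrierInf η (x+1) = if η (x+1) = 1 then carrierInf η x + 1 else max (carrierInf η x - 1) 0 :=
  rfl

lemma cInf_eq_sum {η : ℕ → ℤ} (hη : Ze η) (x : ℕ) :
    carrierInf η x = ∑ m ∈ Finset.Icc 1 x, seatW η x m := by
  induction x with
  | zero => simp [carrierInf]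
  | succ x ih =>
    have hstep : ∀ m, seatW η (x+1) m = seatW η x m + seatUp η m (x+1) - seatDown η m (x+1) :=
      fun m => seatW_succ η x m
    have hsum : ∑ m ∈ Finset.Icc 1 (x+1), seatW η (x+1) m
        = (∑ m ∈ Finset.Icc 1 (x+1), seatW η x m)
          + (∑ m ∈ Finset.Icc 1 (x+1), seatUp η m (x+1))
          - (∑ m ∈ Finset.Icc 1 (x+1), seatDown η m (x+1)) := by
      rw [Finset.sum_congr rfl (fun m (_ : m ∈ Finset.Icc 1 (x+1)) => hstep m),
        Finset.sum_sub_distrib, Finset.sum_add_distrib]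
    have hW : ∑ m ∈ Finset.Icc 1 (x+1), seatW η x m = ∑ m ∈ Finset.Icc 1 x, seatW η x m := by
      rw [Finset.sum_Icc_succ_top (by omega), seatW_zero hη (by omega), add_zero]
    rcases hη (x+1) with h0 | h1
    · rw [carrierInf_succ, if_neg (by rw [h0]; norm_num), hsum, hW, ← ih,
        sum_up_zero (by simpa using h0)]
      by_cases hocc : ∃ j, seatW η ((x+1)-1) (j+1) = 1
      · rw [sum_down_one hη (by simpa using h0) hocc]
        rw [if_pos (le_trans (occSeat_le hη hocc) (by omega))]
        have hpos : 0 < carrierInf η x := by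
          rw [ih]
          have hmem : occSeat η ((x+1)-1) hocc ∈ Finset.Icc 1 x := by
            simp only [Finset.mem_Icc]
            exact ⟨occSeat_pos hocc, by simpa using occSeat_le hη hocc⟩
          have hone : seatW η x (occSeat η ((x+1)-1) hocc) = 1 := by
            simpa using occSeat_spec hocc
          have h5 : seatW η x (occSeat η ((x+1)-1) hocc) ≤ ∑ m ∈ Finset.Icc 1 x, seatW η x m :=
            Finset.single_le_sum (f := fun m => seatW η x m)
              (fun m _ => by rcases seatW01 hη x m with h | h <;> simp [h]) hmem
          rw [hone] at h5
          omega
        rw [max_eq_left (by omega)]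
        ring
      · push_neg at hocc
        have hnocc : ∀ j, seatW η ((x+1)-1) (j+1) = 0 := by
          intro j
          rcases seatW01 hη ((x+1)-1) (j+1) with h | h
          · exact h
          · exact absurd h (hocc j)
        rw [sum_down_nocc hnocc]
        have hz : carrierInf η x = 0 := by
          rw [ih]
          apply Finset.sum_eq_zero
          intro m hm
          simp only [Finset.mem_Icc] at hm
          have := hnocc (m-1)
          simp only [show (x+1)-1 = x from rfl] at this
          rwa [show m - 1 + 1 = m by omega] at this
        rw [hz]
        simp
    · rw [carrierInf_succ, if_pos h1, hsum, hW, ← ih,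
        sum_up_one hη (by omega) h1, sum_down_zero h1,
        if_pos (le_trans (freeSeat_le hη _) (by omega))]
      ring

lemma cInf_nonneg (η : ℕ → ℤ) (x : ℕ) : 0 ≤ carrierInf η x := by
  induction x with
  | zero => simp [carrierInf]
  | succ x ih => rw [carrierInf_succ]; split <;> omega

lemma cInf_le (η : ℕ → ℤ) (x : ℕ) : carrierInf η x ≤ x := by
  induction x with
  | zero => simp [carrierInf]
  | succ x ih => rw [carrierInf_succ]; split <;> [omega; (simp; omega)]

/-- Characterization of records. -/
lemma record_iff {η : ℕ → ℤ} (hη : Ze η) {x : ℕ} (hx : 1 ≤ x) :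
    recordInd η x = 1 ↔ (η x = 0 ∧ carrierInf η (x-1) = 0) := by
  rw [recordInd_eq, evS_split]
  rcases hη x with h0 | h1
  · rw [sum_up_zero h0]
    by_cases hocc : ∃ j, seatW η (x-1) (j+1) = 1
    · rw [sum_down_one hη h0 hocc, if_pos (le_trans (occSeat_le hη hocc) (by omega))]
      constructor
      · intro h; norm_num at h
      · rintro ⟨-, hc⟩
        exfalso
        rw [cInf_eq_sum hη] at hc
        have hmem : occSeat η (x-1) hocc ∈ Finset.Icc 1 (x-1) := by
          simp only [Finset.mem_Icc]
          exact ⟨occSeat_pos hocc, occSeat_le hη hocc⟩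
        have h5 : seatW η (x-1) (occSeat η (x-1) hocc) ≤ ∑ m ∈ Finset.Icc 1 (x-1), seatW η (x-1) m :=
          Finset.single_le_sum (f := fun m => seatW η (x-1) m)
            (fun m _ => by rcases seatW01 hη (x-1) m with h | h <;> simp [h]) hmem
        rw [occSeat_spec hocc] at h5
        omega
    · push_neg at hocc
      have hnocc : ∀ j, seatW η (x-1) (j+1) = 0 := by
        intro j
        rcases seatW01 hη (x-1) (j+1) with h | h
        · exact h
        · exact absurd h (hocc j)
      rw [sum_down_nocc hnocc]
      simp only [h0, true_and, sub_zero, add_zero]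
      constructor
      · intro _
        rw [cInf_eq_sum hη]
        apply Finset.sum_eq_zero
        intro m hm
        simp only [Finset.mem_Icc] at hm
        have := hnocc (m-1); rwa [show m - 1 + 1 = m by omega] at this
      · intro _; norm_num
  · rw [sum_up_one hη hx h1, sum_down_zero h1,
      if_pos (le_trans (freeSeat_le hη _) (by omega))]
    constructor
    · intro h; norm_num at h
    · rintro ⟨h, -⟩; rw [h1] at h; norm_num at h

/-- at a record, no seat events at all (any k). -/
lemma evS_zero_of_record {η : ℕ → ℤ} (hη : Ze η) {x : ℕ} (hx : 1 ≤ x)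
    (hrec : recordInd η x = 1) (k : ℕ) : evS η k x = 0 := by
  obtain ⟨h0, hc⟩ := (record_iff hη hx).1 hrec
  have hnocc : ∀ j, seatW η (x-1) (j+1) = 0 := by
    intro j
    rcases seatW01 hη (x-1) (j+1) with h | h
    · exact h
    · exfalso
      rw [cInf_eq_sum hη] at hc
      have hjx : j + 1 ≤ x - 1 := by
        by_contra hcon
        rw [seatW_zero hη (by omega)] at h; norm_num at h
      have hmem : j + 1 ∈ Finset.Icc 1 (x-1) := by simp only [Finset.mem_Icc]; omega
      have h5 : seatW η (x-1) (j+1) ≤ ∑ m ∈ Finset.Icc 1 (x-1), seatW η (x-1) m :=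
        Finset.single_le_sum (f := fun m => seatW η (x-1) m)
          (fun m _ => by rcases seatW01 hη (x-1) m with h' | h' <;> simp [h']) hmem
      rw [h] at h5
      omega
  rw [evS_split, sum_up_zero h0, sum_down_nocc hnocc]
  norm_num

lemma evS01 {η : ℕ → ℤ} (hη : Ze η) {x : ℕ} (hx : 1 ≤ x) (k : ℕ) :
    evS η k x = 0 ∨ evS η k x = 1 := by
  rw [evS_split]
  rcases hη x with h0 | h1
  · rw [sum_up_zero h0]
    by_cases hocc : ∃ j, seatW η (x-1) (j+1) = 1
    · rw [sum_down_one hη h0 hocc]; split <;> simp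
    · push_neg at hocc
      have hnocc : ∀ j, seatW η (x-1) (j+1) = 0 := fun j => by
        rcases seatW01 hη (x-1) (j+1) with h | h
        · exact h
        · exact absurd h (hocc j)
      rw [sum_down_nocc hnocc]; simp
  · rw [sum_up_one hη hx h1, sum_down_zero h1]; split <;> simp
/-! ### S3: xi and sSeat infrastructure -/

def Rec (η : ℕ → ℤ) : Prop := ∀ N : ℕ, ∃ x, N ≤ x ∧ recordInd η x = 1

lemma xi_zero (η : ℕ → ℤ) (k : ℕ) : xiSeat η k 0 = 0 := by
  simp [xiSeat_eq]

lemma xi_step {η : ℕ → ℤ} (hη : Ze η) (k x : ℕ) :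
    xiSeat η k (x+1) = xiSeat η k x ∨ xiSeat η k (x+1) = xiSeat η k x + 1 := by
  rcases evS01 hη (show 1 ≤ x + 1 by omega) k with h | h <;>
    rw [xiSeat_succ, h] <;> [right; left] <;> ring

lemma xi_mono {η : ℕ → ℤ} (hη : Ze η) (k : ℕ) {x y : ℕ} (hxy : x ≤ y) :
    xiSeat η k x ≤ xiSeat η k y := by
  induction y with
  | zero => simp_all
  | succ y ih =>
    rcases Nat.lt_or_ge x (y+1) with h | h
    · have := ih (by omega)
      rcases xi_step hη k y with h2 | h2 <;> omega
    · have hx1 : x = y + 1 := by omega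
      subst hx1
      exact le_rfl

lemma xi_le_x {η : ℕ → ℤ} (hη : Ze η) (k x : ℕ) : xiSeat η k x ≤ (x : ℤ) := by
  induction x with
  | zero => simp [xi_zero]
  | succ x ih =>
    rcases xi_step hη k x with h | h <;> rw [h] <;> push_cast <;> omega

lemma xi_nonneg {η : ℕ → ℤ} (hη : Ze η) (k x : ℕ) : 0 ≤ xiSeat η k x := by
  have := xi_mono hη k (Nat.zero_le x)
  rw [xi_zero] at this; exact this

lemma record_of_Rec {η : ℕ → ℤ} (hη : Ze η) (hrec : Rec η) (N : ℕ) :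
    ∃ x, N + 1 ≤ x ∧ recordInd η x = 1 := by
  obtain ⟨x, hx, hr⟩ := hrec (N+1)
  exact ⟨x, hx, hr⟩

lemma xi_unbounded {η : ℕ → ℤ} (hη : Ze η) (hrec : Rec η) (k : ℕ) (i : ℕ) :
    ∃ x, (i : ℤ) ≤ xiSeat η k x := by
  induction i with
  | zero => exact ⟨0, by simp [xi_zero]⟩
  | succ i ih =>
    obtain ⟨x, hx⟩ := ih
    obtain ⟨y, hy, hr⟩ := record_of_Rec hη hrec x
    have hy1 : y - 1 + 1 = y := by omega
    have h1 : xiSeat η k ((y-1)+1) = xiSeat η k (y-1) + 1 := by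
      rw [xiSeat_succ, evS_zero_of_record hη (by omega) (by rwa [hy1])]
      ring
    rw [hy1] at h1
    have h2 : xiSeat η k x ≤ xiSeat η k (y-1) := xi_mono hη k (by omega)
    exact ⟨y, by push_cast; omega⟩

lemma xi_hits {η : ℕ → ℤ} (hη : Ze η) (hrec : Rec η) (k : ℕ) (i : ℕ) :
    ∃ x, xiSeat η k x = (i : ℤ) := by
  obtain ⟨X, hX⟩ := xi_unbounded hη hrec k i
  clear hrec
  induction X with
  | zero =>
    rw [xi_zero] at hX
    exact ⟨0, by rw [xi_zero]; omega⟩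
  | succ X ih =>
    rcases Nat.lt_or_ge X 0 with h | _
    · omega
    rcases le_or_gt (i : ℤ) (xiSeat η k X) with h | h
    · exact ih h
    · rcases xi_step hη k X with h2 | h2
      · exact absurd hX (by omega)
      · exact ⟨X+1, by omega⟩

lemma sSeat_spec {η : ℕ → ℤ} (hη : Ze η) (hrec : Rec η) (k i : ℕ) :
    xiSeat η k (sSeat η k i) = (i : ℤ) :=
  Nat.sInf_mem (s := {x : ℕ | xiSeat η k x = (i : ℤ)}) (xi_hits hη hrec k i)

lemma sSeat_min (η : ℕ → ℤ) (k i : ℕ) {y : ℕ} (hy : y < sSeat η k i) :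
    xiSeat η k y ≠ (i : ℤ) :=
  Nat.notMem_of_lt_sInf hy

lemma sSeat_zero (η : ℕ → ℤ) (k : ℕ) : sSeat η k 0 = 0 := by
  have : (0 : ℕ) ∈ {x : ℕ | xiSeat η k x = ((0:ℕ) : ℤ)} := by
    simp [Set.mem_setOf_eq, xi_zero]
  have h2 := Nat.sInf_le this
  unfold sSeat
  omega

lemma sSeat_pos {η : ℕ → ℤ} (hη : Ze η) (hrec : Rec η) {i : ℕ} (hi : 1 ≤ i) :
    1 ≤ sSeat η k i := by
  by_contra h
  have h0 : sSeat η k i = 0 := by omega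
  have := sSeat_spec hη hrec k i
  rw [h0, xi_zero] at this
  omega

lemma sSeat_pred {η : ℕ → ℤ} (hη : Ze η) (hrec : Rec η) (k : ℕ) {i : ℕ} (hi : 1 ≤ i) :
    xiSeat η k (sSeat η k i - 1) = (i : ℤ) - 1 := by
  have hpos : 1 ≤ sSeat η k i := sSeat_pos hη hrec hi
  have hne := sSeat_min η k i (show sSeat η k i - 1 < sSeat η k i by omega)
  have hspec := sSeat_spec hη hrec k i
  have h1 : xiSeat η k (sSeat η k i - 1) ≤ xiSeat η k (sSeat η k i) :=
    xi_mono hη k (by omega)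
  have h2 : xiSeat η k (sSeat η k i) ≤ xiSeat η k (sSeat η k i - 1) + 1 := by
    have h3 : sSeat η k i - 1 + 1 = sSeat η k i := by omega
    rcases xi_step hη k (sSeat η k i - 1) with h4 | h4 <;> rw [h3] at h4 <;> omega
  omega

/-- the i-th kept site is a "no event ≤ k" site. -/
lemma sSeat_kept {η : ℕ → ℤ} (hη : Ze η) (hrec : Rec η) (k : ℕ) {i : ℕ} (hi : 1 ≤ i) :
    evS η k (sSeat η k i) = 0 := by
  have hpos : 1 ≤ sSeat η k i := sSeat_pos hη hrec hi
  have h3 : sSeat η k i - 1 + 1 = sSeat η k i := by omega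
  have := xiSeat_succ η k (sSeat η k i - 1)
  rw [h3, sSeat_spec hη hrec k i, sSeat_pred hη hrec k hi] at this
  omega

lemma sSeat_eq_of_jump {η : ℕ → ℤ} (hη : Ze η) {k i x : ℕ} (hx : 1 ≤ x)
    (h1 : xiSeat η k x = (i : ℤ)) (h2 : xiSeat η k (x-1) = (i : ℤ) - 1) :
    sSeat η k i = x := by
  apply le_antisymm
  · exact Nat.sInf_le h1
  · by_contra h
    push_neg at h
    have h3 : sSeat η k i ≤ x - 1 := by omega
    have h4 : xiSeat η k (sSeat η k i) = (i : ℤ) :=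
      Nat.sInf_mem (s := {x : ℕ | xiSeat η k x = (i : ℤ)}) ⟨x, h1⟩
    have h5 : xiSeat η k (sSeat η k i) ≤ xiSeat η k (x-1) := xi_mono hη k h3
    rw [h4] at h5
    omega

lemma sSeat_strict_mono {η : ℕ → ℤ} (hη : Ze η) (hrec : Rec η) (k : ℕ) {i j : ℕ}
    (hij : i < j) : sSeat η k i < sSeat η k j := by
  rcases Nat.lt_or_ge (sSeat η k i) (sSeat η k j) with h | h
  · exact h
  · exfalso
    have h1 := xi_mono hη k h
    rw [sSeat_spec hη hrec k i, sSeat_spec hη hrec k j] at h1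
    omega

lemma skip01 {η : ℕ → ℤ} (hη : Ze η) (k : ℕ) : Ze (skip η k) := fun x => hη _

lemma evS_zero_k0 (η : ℕ → ℤ) (x : ℕ) : evS η 0 x = 0 := by simp [evS]

lemma xi_k0 (η : ℕ → ℤ) (x : ℕ) : xiSeat η 0 x = (x : ℤ) := by
  rw [xiSeat_eq]
  rw [Finset.sum_congr rfl (fun y _ => evS_zero_k0 η y)]
  simp

lemma sSeat_k0 (η : ℕ → ℤ) (i : ℕ) : sSeat η 0 i = i := by
  unfold sSeat
  have : {x : ℕ | xiSeat η 0 x = (i : ℤ)} = {i} := by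
    ext x
    simp [xi_k0]
  rw [this]
  simp

lemma skip_k0 (η : ℕ → ℤ) : skip η 0 = η := by
  funext x
  unfold skip
  rw [sSeat_k0]
/-! ### S4: carrier / evolution basics -/

lemma carrier_succ (η : ℕ → ℤ) (ℓ x : ℕ) :
    carrier η ℓ (x+1) =
      if η (x + 1) = 1 ∧ carrier η ℓ x < (ℓ : ℤ) then carrier η ℓ x + 1
      else if η (x + 1) = 0 ∧ 0 < carrier η ℓ x then carrier η ℓ x - 1
      else carrier η ℓ x := rfl

lemma carrier_nonneg (η : ℕ → ℤ) (ℓ x : ℕ) : 0 ≤ carrier η ℓ x := by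
  induction x with
  | zero => simp [carrier]
  | succ x ih => rw [carrier_succ]; split_ifs <;> omega

lemma carrier_le (η : ℕ → ℤ) (ℓ x : ℕ) : carrier η ℓ x ≤ (ℓ : ℤ) := by
  induction x with
  | zero => simp [carrier]
  | succ x ih => rw [carrier_succ]; split_ifs <;> omega

lemma carrier_cap0 (η : ℕ → ℤ) (x : ℕ) : carrier η 0 x = 0 := by
  induction x with
  | zero => rfl
  | succ x ih =>
    rw [carrier_succ, ih]
    norm_num

lemma tEvol_cap0 (η : ℕ → ℤ) : tEvol η 0 = η := by
  funext x
  unfold tEvol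
  rw [carrier_cap0, carrier_cap0]
  ring

lemma carrier_cap1 {η : ℕ → ℤ} (hη : Ze η) {x : ℕ} (hx : 1 ≤ x) :
    carrier η 1 x = η x := by
  induction x with
  | zero => omega
  | succ x ih =>
    rcases Nat.eq_zero_or_pos x with h0 | hpos
    · subst h0
      rcases hη 1 with h | h <;> rw [carrier_succ] <;> simp [h, carrier]
    · rw [carrier_succ, ih hpos]
      rcases hη (x+1) with h | h <;> rcases hη x with h' | h' <;>
        simp [h, h'] <;> norm_num

def shiftF (σ : ℕ → ℤ) : ℕ → ℤ :=
  fun x => if x = 0 then σ 0 else if x = 1 then 0 else σ (x-1)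

lemma tEvol_one_eq_shiftF {η : ℕ → ℤ} (hη : Ze η) : tEvol η 1 = shiftF η := by
  funext x
  unfold tEvol shiftF
  match x with
  | 0 => simp [carrier]
  | 1 =>
    rw [show (1:ℕ) - 1 = 0 from rfl, show carrier η 1 0 = 0 from rfl,
      carrier_cap1 hη le_rfl, if_neg one_ne_zero, if_pos rfl]
    ring
  | (x+2) =>
    rw [carrier_cap1 hη (by omega), carrier_cap1 hη (by omega),
      if_neg (by omega), if_neg (by omega)]
    ring

lemma tEvol01 {η : ℕ → ℤ} (hη : Ze η) (ℓ : ℕ) : Ze (tEvol η ℓ) := by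
  intro x
  unfold tEvol
  rcases Nat.eq_zero_or_pos x with h0 | hpos
  · subst h0; simpa using hη 0
  · have hx : x - 1 + 1 = x := by omega
    have h2 := carrier_succ η ℓ (x-1)
    rw [hx] at h2
    rcases hη x with h | h <;> rw [h2, h] <;> split_ifs <;> simp_all <;> omega

lemma tEvolInf01 {η : ℕ → ℤ} (hη : Ze η) : Ze (tEvolInf η) := by
  intro x
  unfold tEvolInf
  rcases Nat.eq_zero_or_pos x with h0 | hpos
  · subst h0; simpa using hη 0
  · have hx : x - 1 + 1 = x := by omega
    have h2 := carrierInf_succ η (x-1)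
    rw [hx] at h2
    have h3 := cInf_nonneg η (x-1)
    rcases hη x with h | h <;> rw [h2, h] <;> simp <;> omega

/-- truncation: for x ≤ ℓ the finite carrier agrees with the infinite one. -/
lemma carrier_eq_cInf {η : ℕ → ℤ} (hη : Ze η) {ℓ x : ℕ} (hx : x ≤ ℓ) :
    carrier η ℓ x = carrierInf η x := by
  induction x with
  | zero => rfl
  | succ x ih =>
    rw [carrier_succ, carrierInf_succ, ih (by omega)]
    have h1 := cInf_le η x
    have h2 := cInf_nonneg η x
    rcases hη (x+1) with h | h
    · have hne : ¬(η (x+1) = 1 ∧ carrierInf η x < (ℓ:ℤ)) := by rw [h]; norm_num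
      have hne2 : ¬(η (x+1) = 1) := by rw [h]; norm_num
      rw [if_neg hne, if_neg hne2]
      split_ifs with hc
      · rw [max_eq_left (by omega)]
      · rw [max_eq_right (by omega)]
        omega
    · have hlt : carrierInf η x < (ℓ:ℤ) := by
        have : ((x:ℤ)) < (ℓ:ℤ) := by exact_mod_cast (by omega : x < ℓ)
        omega
      rw [if_pos ⟨h, hlt⟩, if_pos h]

lemma tEvol_eq_tEvolInf {η : ℕ → ℤ} (hη : Ze η) {ℓ x : ℕ} (hx : x ≤ ℓ) :
    tEvol η ℓ x = tEvolInf η x := by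
  unfold tEvol tEvolInf
  rw [carrier_eq_cInf hη (by omega), carrier_eq_cInf hη hx]
/-! ### S5: walk, Lindley, record preservation -/

def walkS (η : ℕ → ℤ) : ℕ → ℤ
  | 0 => 0
  | x + 1 => walkS η x + 2 * η (x+1) - 1

def walkMin (η : ℕ → ℤ) : ℕ → ℤ
  | 0 => 0
  | x + 1 => min (walkMin η x) (walkS η (x+1))

lemma walkMin_le_S (η : ℕ → ℤ) {x y : ℕ} (hxy : x ≤ y) :
    walkMin η y ≤ walkS η x := by
  induction y with
  | zero =>
    have : x = 0 := by omega
    subst this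
    simp [walkMin, walkS]
  | succ y ih =>
    rcases Nat.lt_or_ge x (y+1) with h | h
    · calc walkMin η (y+1) ≤ walkMin η y := min_le_left _ _
        _ ≤ walkS η x := ih (by omega)
    · have : x = y+1 := by omega
      subst this
      exact min_le_right _ _

lemma walkMin_mono (η : ℕ → ℤ) {x y : ℕ} (hxy : x ≤ y) :
    walkMin η y ≤ walkMin η x := by
  induction y with
  | zero => simp_all
  | succ y ih =>
    rcases Nat.lt_or_ge x (y+1) with h | h
    · calc walkMin η (y+1) ≤ walkMin η y := min_le_left _ _
        _ ≤ walkMin η x := ih (by omega)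
    · have : x = y+1 := by omega
      subst this
      exact le_rfl

lemma lindley {η : ℕ → ℤ} (hη : Ze η) (x : ℕ) :
    carrierInf η x = walkS η x - walkMin η x := by
  induction x with
  | zero => simp [carrierInf, walkS, walkMin]
  | succ x ih =>
    have hm : walkMin η x ≤ walkS η x := walkMin_le_S η le_rfl
    rw [carrierInf_succ, ih]
    rcases hη (x+1) with h | h
    · rw [if_neg (by rw [h]; norm_num)]
      show _ = walkS η (x+1) - walkMin η (x+1)
      rw [show walkS η (x+1) = walkS η x + 2 * η (x+1) - 1 from rfl,
        show walkMin η (x+1) = min (walkMin η x) (walkS η (x+1)) from rfl,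
        show walkS η (x+1) = walkS η x + 2 * η (x+1) - 1 from rfl, h]
      rcases le_or_gt (walkS η x - 1) (walkMin η x) with h2 | h2
      · rw [min_eq_right (by omega), max_eq_right (by omega)]
        ring
      · rw [min_eq_left (by omega), max_eq_left (by omega)]
        ring
    · rw [if_pos h]
      show _ = walkS η (x+1) - walkMin η (x+1)
      rw [show walkS η (x+1) = walkS η x + 2 * η (x+1) - 1 from rfl,
        show walkMin η (x+1) = min (walkMin η x) (walkS η (x+1)) from rfl,
        show walkS η (x+1) = walkS η x + 2 * η (x+1) - 1 from rfl, h,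
        min_eq_left (by omega)]
      ring

lemma record_iff_newmin {η : ℕ → ℤ} (hη : Ze η) {x : ℕ} (hx : 1 ≤ x) :
    recordInd η x = 1 ↔ walkS η x < walkMin η (x-1) := by
  rw [record_iff hη hx]
  have hx1 : x - 1 + 1 = x := by omega
  have hS : walkS η x = walkS η (x-1) + 2 * η x - 1 := by
    conv_lhs => rw [← hx1]
    rw [show walkS η ((x-1)+1) = walkS η (x-1) + 2 * η ((x-1)+1) - 1 from rfl, hx1]
  have hL := lindley hη (x-1)
  have hm : walkMin η (x-1) ≤ walkS η (x-1) := walkMin_le_S η le_rfl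
  constructor
  · rintro ⟨h0, hc⟩
    rw [hS, h0]
    omega
  · intro h
    rcases hη x with h0 | h1
    · exact ⟨h0, by rw [hS, h0] at h; omega⟩
    · exfalso
      rw [hS, h1] at h
      omega

lemma S_unbounded {η : ℕ → ℤ} (hη : Ze η) (hrec : Rec η) (B : ℤ) :
    ∃ x, walkS η x < B := by
  have key : ∀ n : ℕ, ∃ x, walkS η x ≤ -(n : ℤ) := by
    intro n
    induction n with
    | zero => exact ⟨0, by simp [walkS]⟩
    | succ n ih =>
      obtain ⟨x, hx⟩ := ih
      obtain ⟨y, hy, hr⟩ := record_of_Rec hη hrec x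
      have h1 : walkS η y < walkMin η (y-1) := (record_iff_newmin hη (by omega)).1 hr
      have h2 : walkMin η (y-1) ≤ walkS η x := walkMin_le_S η (by omega)
      refine ⟨y, ?_⟩
      push_cast
      omega
  obtain ⟨n, hn⟩ : ∃ n : ℕ, -(n:ℤ) < B := by
    rcases le_or_gt 0 B with h | h
    · exact ⟨1, by omega⟩
    · exact ⟨(-B).toNat + 1, by omega⟩
  obtain ⟨x, hx⟩ := key n
  exact ⟨x, by omega⟩

lemma Rec_of_S_unbounded {η : ℕ → ℤ} (hη : Ze η) (hS : ∀ B : ℤ, ∃ x, walkS η x < B) :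
    Rec η := by
  intro N
  obtain ⟨x₀, hx₀⟩ := hS (walkMin η N)
  have hex : ∃ x, walkS η x < walkMin η N := ⟨x₀, hx₀⟩
  classical
  set x₁ := Nat.find hex with hx₁def
  have hspec : walkS η x₁ < walkMin η N := Nat.find_spec hex
  have hmin : ∀ y, y < x₁ → ¬ walkS η y < walkMin η N := fun y hy => Nat.find_min hex hy
  have hN : N < x₁ := by
    by_contra h
    push_neg at h
    exact absurd hspec (by have := walkMin_le_S η h; omega)
  have hwm : walkMin η N ≤ walkMin η (x₁ - 1) := by
    have hgen : ∀ z, N ≤ z → z ≤ x₁ - 1 → walkMin η N ≤ walkMin η z := by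
      intro z hz1 hz2
      induction z with
      | zero => simp_all
      | succ z ih =>
        rcases Nat.lt_or_ge N (z+1) with h | h
        · have h1 : walkMin η N ≤ walkMin η z := ih (by omega) (by omega)
          rw [show walkMin η (z+1) = min (walkMin η z) (walkS η (z+1)) from rfl]
          have h2 : ¬ walkS η (z+1) < walkMin η N := hmin (z+1) (by omega)
          omega
        · have : N = z+1 := by omega
          subst this
          exact le_rfl
    exact hgen (x₁ - 1) (by omega) le_rfl
  refine ⟨x₁, by omega, ?_⟩
  rw [record_iff_newmin hη (by omega)]
  omega

lemma walkS_tEvol {η : ℕ → ℤ} (ℓ : ℕ) (x : ℕ) :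
    walkS (tEvol η ℓ) x = walkS η x - 2 * carrier η ℓ x := by
  induction x with
  | zero => simp [walkS, carrier]
  | succ x ih =>
    rw [show walkS (tEvol η ℓ) (x+1) = walkS (tEvol η ℓ) x + 2 * (tEvol η ℓ) (x+1) - 1 from rfl,
      ih, show walkS η (x+1) = walkS η x + 2 * η (x+1) - 1 from rfl]
    unfold tEvol
    rw [show (x+1) - 1 = x from rfl]
    ring

lemma walkS_tEvolInf {η : ℕ → ℤ} (x : ℕ) :
    walkS (tEvolInf η) x = walkS η x - 2 * carrierInf η x := by
  induction x with
  | zero => simp [walkS, carrierInf]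
  | succ x ih =>
    rw [show walkS (tEvolInf η) (x+1) = walkS (tEvolInf η) x + 2 * (tEvolInf η) (x+1) - 1 from rfl,
      ih, show walkS η (x+1) = walkS η x + 2 * η (x+1) - 1 from rfl]
    unfold tEvolInf
    rw [show (x+1) - 1 = x from rfl]
    ring

lemma Rec_tEvol {η : ℕ → ℤ} (hη : Ze η) (hrec : Rec η) (ℓ : ℕ) : Rec (tEvol η ℓ) := by
  apply Rec_of_S_unbounded (tEvol01 hη ℓ)
  intro B
  obtain ⟨x, hx⟩ := S_unbounded hη hrec B
  refine ⟨x, ?_⟩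
  rw [walkS_tEvol]
  have := carrier_nonneg η ℓ x
  omega

lemma Rec_tEvolInf {η : ℕ → ℤ} (hη : Ze η) (hrec : Rec η) : Rec (tEvolInf η) := by
  apply Rec_of_S_unbounded (tEvolInf01 hη)
  intro B
  obtain ⟨x, hx⟩ := S_unbounded hη hrec B
  refine ⟨x, ?_⟩
  rw [walkS_tEvolInf, lindley hη]
  have := walkMin_le_S η (le_refl x)
  omega
/-! ### S6: the 1-skip map structure -/

lemma Ico_one_one : Finset.Ico 1 1 = (∅ : Finset ℕ) := by simp

lemma evS_one (η : ℕ → ℤ) (x : ℕ) :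
    evS η 1 x = η x * (1 - seatW η (x-1) 1) + (1 - η x) * seatW η (x-1) 1 := by
  unfold evS
  rw [Finset.Icc_self, Finset.sum_singleton]
  unfold seatUp seatDown
  rw [Ico_one_one]
  simp only [Finset.prod_empty, mul_one]

lemma ev1_zero_iff {η : ℕ → ℤ} (hη : Ze η) (x : ℕ) :
    evS η 1 x = 0 ↔ η x = seatW η (x-1) 1 := by
  rw [evS_one]
  rcases hη x with h | h <;> rcases seatW01 hη (x-1) 1 with h' | h' <;>
    rw [h, h'] <;> norm_num

lemma upDown_nonneg {η : ℕ → ℤ} (hη : Ze η) (m x : ℕ) :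
    0 ≤ seatUp η m x + seatDown η m x := by
  have h1 : (0:ℤ) ≤ seatUp η m x := by
    unfold seatUp
    have hp := prod01 (s := Finset.Ico 1 m) (f := fun j => seatW η (x-1) j)
      (fun j _ => seatW01 hη (x-1) j)
    rcases hη x with h | h <;> rcases seatW01 hη (x-1) m with h' | h' <;>
      rcases hp with h'' | h'' <;> simp [h, h', h'']
  have h2 : (0:ℤ) ≤ seatDown η m x := by
    unfold seatDown
    have hp := prod01 (s := Finset.Ico 1 m) (f := fun j => 1 - seatW η (x-1) j)
      (fun j _ => by rcases seatW01 hη (x-1) j with h | h <;> simp [h])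
    rcases hη x with h | h <;> rcases seatW01 hη (x-1) m with h' | h' <;>
      rcases hp with h'' | h'' <;> simp [h, h', h'']
  omega

lemma evS_mono_k {η : ℕ → ℤ} (hη : Ze η) {k k' : ℕ} (hk : k ≤ k') (x : ℕ) :
    evS η k x ≤ evS η k' x := by
  unfold evS
  apply Finset.sum_le_sum_of_subset_of_nonneg (Finset.Icc_subset_Icc_right hk)
  intro m _ _
  exact upDown_nonneg hη m x

/-- an edge (seat-1 event) does not modify seats ≥ 2. -/
lemma edge_high_W {η : ℕ → ℤ} (hη : Ze η) {x : ℕ} (hx : 1 ≤ x)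
    (hedge : η x ≠ seatW η (x-1) 1) {m : ℕ} (hm : 2 ≤ m) :
    seatW η x m = seatW η (x-1) m := by
  have hx1 : x - 1 + 1 = x := by omega
  have hs : seatW η x m = seatW η (x-1) m + seatUp η m x - seatDown η m x := by
    conv_lhs => rw [← hx1]
    rw [seatW_succ, hx1]
  rw [hs]
  rcases hη x with h | h
  · rcases seatW01 hη (x-1) 1 with h' | h'
    · exact absurd (h.trans h'.symm) hedge
    · have hdown : seatDown η m x = 0 := by
        unfold seatDown
        rw [Finset.prod_eq_zero (i := 1) (by simp [Finset.mem_Ico]; omega)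
          (by rw [h']; ring)]
        ring
      have hup : seatUp η m x = 0 := by unfold seatUp; rw [h]; ring
      rw [hup, hdown]; ring
  · rcases seatW01 hη (x-1) 1 with h' | h'
    · have hup : seatUp η m x = 0 := by
        unfold seatUp
        rw [Finset.prod_eq_zero (i := 1) (by simp [Finset.mem_Ico]; omega) h']
        ring
      have hdown : seatDown η m x = 0 := by unfold seatDown; rw [h]; ring
      rw [hup, hdown]; ring
    · exact absurd (h.trans h'.symm) hedge

/-- chain of edges preserves seats ≥ 2. -/
lemma chain_high_W {η : ℕ → ℤ} (hη : Ze η) {a b : ℕ} (hab : a ≤ b)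
    (hedges : ∀ z, a < z → z ≤ b → η z ≠ seatW η (z-1) 1) {m : ℕ} (hm : 2 ≤ m) :
    seatW η b m = seatW η a m := by
  induction b with
  | zero =>
    have : a = 0 := by omega
    rw [this]
  | succ b ih =>
    rcases Nat.lt_or_ge a (b+1) with h | h
    · have h1 : seatW η (b+1) m = seatW η ((b+1)-1) m :=
        edge_high_W hη (by omega) (hedges (b+1) (by omega) le_rfl) hm
      rw [h1]
      exact ih (by omega) (fun z hz1 hz2 => hedges z hz1 (by omega))
    · have : a = b+1 := by omega
      rw [this]

/-- between consecutive kept sites, everything is an edge. -/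
lemma edges_between {η : ℕ → ℤ} (hη : Ze η) (hrec : Rec η) {i : ℕ} {z : ℕ}
    (h1 : sSeat η 1 i < z) (h2 : z ≤ sSeat η 1 (i+1) - 1) :
    η z ≠ seatW η (z-1) 1 := by
  have hs1 := sSeat_spec hη hrec 1 i
  have hsp := sSeat_pred hη hrec 1 (show 1 ≤ i + 1 by omega)
  have hz1 : 1 ≤ z := by omega
  have hxa : xiSeat η 1 z ≤ xiSeat η 1 (sSeat η 1 (i+1) - 1) := xi_mono hη 1 (by omega)
  have hxb : xiSeat η 1 (sSeat η 1 i) ≤ xiSeat η 1 (z-1) := xi_mono hη 1 (by omega)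
  have hxc : xiSeat η 1 (z-1) ≤ xiSeat η 1 z := xi_mono hη 1 (by omega)
  rw [hsp] at hxa
  rw [hs1] at hxb
  have hxz : xiSeat η 1 z = (i:ℤ) ∧ xiSeat η 1 (z-1) = (i:ℤ) := by
    constructor <;> push_cast at * <;> omega
  have hstep : xiSeat η 1 z = xiSeat η 1 (z-1) + 1 - evS η 1 z := by
    have hz2 : z - 1 + 1 = z := by omega
    conv_lhs => rw [← hz2]
    rw [xiSeat_succ, hz2]
  have hev : evS η 1 z = 1 := by omega
  intro hcon
  rw [(ev1_zero_iff hη z).2 hcon] at hev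
  norm_num at hev

lemma kept_at_sSeat {η : ℕ → ℤ} (hη : Ze η) (hrec : Rec η) {i : ℕ} (hi : 1 ≤ i) :
    η (sSeat η 1 i) = seatW η (sSeat η 1 i - 1) 1 :=
  (ev1_zero_iff hη _).1 (sSeat_kept hη hrec 1 hi)

lemma prod_shift (f : ℕ → ℤ) (a b : ℕ) :
    (∏ j ∈ Finset.Ico a b, f (j+1)) = ∏ j ∈ Finset.Ico (a+1) (b+1), f j := by
  rw [← Finset.map_add_right_Ico a b 1, Finset.prod_map]
  rfl

lemma sum_shift (f : ℕ → ℤ) (a b : ℕ) :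
    (∑ j ∈ Finset.Icc a b, f (j+1)) = ∑ j ∈ Finset.Icc (a+1) (b+1), f j := by
  rw [← Finset.map_add_right_Icc a b 1, Finset.sum_map]
  rfl

/-- Main seat-shift lemma: seats of Ψ₁η are seats ≥ 2 of η at kept sites. -/
lemma skip_seatW {η : ℕ → ℤ} (hη : Ze η) (hrec : Rec η) (i : ℕ) {m : ℕ} (hm : 1 ≤ m) :
    seatW (skip η 1) i m = seatW η (sSeat η 1 i) (m+1) := by
  induction i generalizing m with
  | zero => rw [sSeat_zero]; rfl
  | succ i ih =>
    set y := sSeat η 1 (i+1) with hy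
    have hy1 : 1 ≤ y := sSeat_pos hη hrec (by omega)
    have hmono : sSeat η 1 i < y := sSeat_strict_mono hη hrec 1 (by omega)
    have hchain : ∀ m', 2 ≤ m' → seatW η (y-1) m' = seatW η (sSeat η 1 i) m' := by
      intro m' hm'
      exact chain_high_W hη (by omega)
        (fun z hz1 hz2 => edges_between hη hrec hz1 (by omega)) hm'
    have hkept : η y = seatW η (y-1) 1 := kept_at_sSeat hη hrec (by omega)
    have hval : skip η 1 (i+1) = η y := rfl
    have hRHS : seatW η y (m+1) = seatW η (y-1) (m+1)
        + η y * (1 - seatW η (y-1) (m+1)) * (∏ j ∈ Finset.Ico 1 (m+1), seatW η (y-1) j)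
        - (1 - η y) * seatW η (y-1) (m+1) * (∏ j ∈ Finset.Ico 1 (m+1), (1 - seatW η (y-1) j)) := by
      have hyy : y - 1 + 1 = y := by omega
      conv_lhs => rw [← hyy]
      rw [seatW]
      rw [hyy]
    have hsplitW : (∏ j ∈ Finset.Ico 1 (m+1), seatW η (y-1) j)
        = seatW η (y-1) 1 * ∏ j ∈ Finset.Ico 1 m, seatW (skip η 1) i j := by
      rw [Finset.prod_eq_prod_Ico_succ_bot (by omega : 1 < m + 1)]
      congr 1
      rw [← prod_shift (fun j => seatW η (y-1) j) 1 m]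
      apply Finset.prod_congr rfl
      intro j hj
      have hj2 : 1 ≤ j := (Finset.mem_Ico.1 hj).1
      rw [hchain (j+1) (by omega), ← ih hj2]
    have hsplitW' : (∏ j ∈ Finset.Ico 1 (m+1), (1 - seatW η (y-1) j))
        = (1 - seatW η (y-1) 1) * ∏ j ∈ Finset.Ico 1 m, (1 - seatW (skip η 1) i j) := by
      rw [Finset.prod_eq_prod_Ico_succ_bot (by omega : 1 < m + 1)]
      congr 1
      rw [← prod_shift (fun j => 1 - seatW η (y-1) j) 1 m]
      apply Finset.prod_congr rfl
      intro j hj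
      have hj2 : 1 ≤ j := (Finset.mem_Ico.1 hj).1
      rw [hchain (j+1) (by omega), ← ih hj2]
    have hWm : seatW η (y-1) (m+1) = seatW (skip η 1) i m := by
      rw [hchain (m+1) (by omega), ← ih hm]
    rw [seatW, hval, hRHS, hsplitW, hsplitW', hWm]
    rcases hη y with h | h
    · rw [h, ← hkept, h]
      ring
    · rw [h, ← hkept, h]
      ring
/-! ### S7: event correspondence and composition of skips -/

lemma skip_event {η : ℕ → ℤ} (hη : Ze η) (hrec : Rec η) {i m : ℕ} (hi : 1 ≤ i) (hm : 1 ≤ m) :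
    seatUp (skip η 1) m i + seatDown (skip η 1) m i
      = seatUp η (m+1) (sSeat η 1 i) + seatDown η (m+1) (sSeat η 1 i) := by
  set y := sSeat η 1 i with hy
  have hy1 : 1 ≤ y := sSeat_pos hη hrec hi
  have hii : i - 1 + 1 = i := by omega
  have hmono : sSeat η 1 (i-1) < y := by
    rw [hy, ← hii]
    exact sSeat_strict_mono hη hrec 1 (by omega)
  have hWp : ∀ j, 1 ≤ j → seatW (skip η 1) (i-1) j = seatW η (y-1) (j+1) := by
    intro j hj
    rw [skip_seatW hη hrec (i-1) hj]
    have := chain_high_W hη (show sSeat η 1 (i-1) ≤ y - 1 by omega)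
      (fun z hz1 hz2 => by
        refine edges_between hη hrec (i := i-1) hz1 ?_
        rw [hii]
        omega) (show 2 ≤ j + 1 by omega)
    rw [this]
  have hkept : η y = seatW η (y-1) 1 := kept_at_sSeat hη hrec hi
  have hval : skip η 1 i = η y := rfl
  have hprod : (∏ j ∈ Finset.Ico 1 (m+1), seatW η (y-1) j)
      = seatW η (y-1) 1 * ∏ j ∈ Finset.Ico 1 m, seatW (skip η 1) (i-1) j := by
    rw [Finset.prod_eq_prod_Ico_succ_bot (by omega : 1 < m + 1)]
    congr 1
    rw [← prod_shift (fun j => seatW η (y-1) j) 1 m]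
    exact Finset.prod_congr rfl (fun j hj => (hWp j (Finset.mem_Ico.1 hj).1).symm)
  have hprod' : (∏ j ∈ Finset.Ico 1 (m+1), (1 - seatW η (y-1) j))
      = (1 - seatW η (y-1) 1) * ∏ j ∈ Finset.Ico 1 m, (1 - seatW (skip η 1) (i-1) j) := by
    rw [Finset.prod_eq_prod_Ico_succ_bot (by omega : 1 < m + 1)]
    congr 1
    rw [← prod_shift (fun j => 1 - seatW η (y-1) j) 1 m]
    exact Finset.prod_congr rfl (fun j hj => by rw [hWp j (Finset.mem_Ico.1 hj).1])
  unfold seatUp seatDown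
  rw [hval, hWp m hm, hprod, hprod']
  rcases hη y with h | h <;> rw [h, ← hkept, h] <;> ring


lemma Rec_skip1 {η : ℕ → ℤ} (hη : Ze η) (hrec : Rec η) : Rec (skip η 1) := by
  intro N
  obtain ⟨X, hX⟩ := xi_unbounded hη hrec 1 N
  obtain ⟨y, hyX, hr⟩ := record_of_Rec hη hrec X
  have hy1 : 1 ≤ y := by omega
  have hev0 : evS η 1 y = 0 := evS_zero_of_record hη hy1 hr 1
  have hjump : xiSeat η 1 y = xiSeat η 1 (y-1) + 1 := by
    have hy2 : y - 1 + 1 = y := by omega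
    conv_lhs => rw [← hy2]
    rw [xiSeat_succ, hy2, hev0]
    ring
  have hnn := xi_nonneg hη 1 (y-1)
  set i := (xiSeat η 1 y).toNat with hidef
  have hi1 : 1 ≤ i := by omega
  have hiN : N ≤ i := by
    have := xi_mono hη 1 (show X ≤ y by omega)
    omega
  have hiy : xiSeat η 1 y = (i : ℤ) := by omega
  have hs : sSeat η 1 i = y := sSeat_eq_of_jump hη hy1 hiy (by omega)
  refine ⟨i, hiN, ?_⟩
  rw [recordInd_eq]
  have hz : evS (skip η 1) i i = 0 := by
    unfold evS
    apply Finset.sum_eq_zero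
    intro m hm
    have hm1 : 1 ≤ m := (Finset.mem_Icc.1 hm).1
    have hmi : m ≤ i := (Finset.mem_Icc.1 hm).2
    rw [skip_event hη hrec hi1 hm1, hs]
    have hall : evS η (i+1) y = 0 := evS_zero_of_record hη hy1 hr (i+1)
    have hnonneg : ∀ m' ∈ Finset.Icc 1 (i+1), 0 ≤ seatUp η m' y + seatDown η m' y :=
      fun m' _ => upDown_nonneg hη m' y
    have := (Finset.sum_eq_zero_iff_of_nonneg hnonneg).1 hall (m+1)
      (by simp [Finset.mem_Icc]; omega)
    exact this
  rw [hz]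
  ring

lemma evS_comp {η : ℕ → ℤ} (hη : Ze η) (hrec : Rec η) {i : ℕ} (hi : 1 ≤ i) (k : ℕ) :
    evS (skip η 1) k i = ∑ m ∈ Finset.Icc 2 (k+1),
      (seatUp η m (sSeat η 1 i) + seatDown η m (sSeat η 1 i)) := by
  unfold evS
  rw [Finset.sum_congr rfl (fun m hm => skip_event hη hrec hi (Finset.mem_Icc.1 hm).1)]
  rw [sum_shift (fun m => seatUp η m (sSeat η 1 i) + seatDown η m (sSeat η 1 i)) 1 k]

lemma evS_succ_split {η : ℕ → ℤ} (k x : ℕ) :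
    evS η (k+1) x = (seatUp η 1 x + seatDown η 1 x)
      + ∑ m ∈ Finset.Icc 2 (k+1), (seatUp η m x + seatDown η m x) := by
  unfold evS
  rw [← Finset.Ico_add_one_right_eq_Icc 1 (k+1), Finset.sum_eq_sum_Ico_succ_bot (by omega : 1 < k + 1 + 1),
    Finset.Ico_add_one_right_eq_Icc 2 (k+1)]

lemma ev1_eq_evS1 (η : ℕ → ℤ) (x : ℕ) :
    seatUp η 1 x + seatDown η 1 x = evS η 1 x := by
  unfold evS
  rw [Finset.Icc_self, Finset.sum_singleton]

lemma xi_comp {η : ℕ → ℤ} (hη : Ze η) (hrec : Rec η) (k : ℕ) (x : ℕ) :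
    xiSeat η (k+1) x = xiSeat (skip η 1) k ((xiSeat η 1 x).toNat) := by
  induction x with
  | zero => rw [xi_zero, xi_zero]; norm_num; rw [xi_zero]
  | succ x ih =>
    have hnn := xi_nonneg hη 1 x
    have hnn1 := xi_nonneg hη 1 (x+1)
    rcases evS01 hη (show 1 ≤ x+1 by omega) 1 with h0 | h1
    · -- kept site
      have hjump : xiSeat η 1 (x+1) = xiSeat η 1 x + 1 := by
        rw [xiSeat_succ, h0]; ring
      set i := (xiSeat η 1 x).toNat with hidef
      have hix : xiSeat η 1 x = (i : ℤ) := by omega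
      have hix1 : xiSeat η 1 (x+1) = ((i+1 : ℕ) : ℤ) := by push_cast; omega
      have htn : (xiSeat η 1 (x+1)).toNat = i + 1 := by omega
      have hs : sSeat η 1 (i+1) = x + 1 :=
        sSeat_eq_of_jump hη (by omega) hix1 (by simp only [Nat.add_sub_cancel]; push_cast; omega)
      rw [htn, xiSeat_succ, xiSeat_succ, ih, evS_succ_split, ev1_eq_evS1, h0,
        evS_comp hη hrec (by omega : 1 ≤ i+1) k, hs]
      ring
    · -- edge site
      have hsame : xiSeat η 1 (x+1) = xiSeat η 1 x := by
        rw [xiSeat_succ, h1]; ring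
      have hev : evS η (k+1) (x+1) = 1 := by
        have hle := evS_mono_k hη (show 1 ≤ k+1 by omega) (x+1)
        rcases evS01 hη (show 1 ≤ x+1 by omega) (k+1) with h | h
        · omega
        · exact h
      rw [xiSeat_succ, hev, hsame, ih]
      ring

lemma sSeat_comp {η : ℕ → ℤ} (hη : Ze η) (hrec : Rec η) (k n : ℕ) :
    sSeat η (k+1) n = sSeat η 1 (sSeat (skip η 1) k n) := by
  have hp : Ze (skip η 1) := skip01 hη 1
  have hpr : Rec (skip η 1) := Rec_skip1 hη hrec
  set a := sSeat (skip η 1) k n with ha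
  set x' := sSeat η 1 a with hx'
  have hmem : xiSeat η (k+1) x' = (n : ℤ) := by
    rw [xi_comp hη hrec k x']
    have h1 : xiSeat η 1 x' = (a : ℤ) := sSeat_spec hη hrec 1 a
    rw [h1]
    norm_num
    exact sSeat_spec hp hpr k n
  apply le_antisymm
  · exact Nat.sInf_le hmem
  · by_contra hcon
    push_neg at hcon
    have h4 : xiSeat η (k+1) (sSeat η (k+1) n) = (n : ℤ) := sSeat_spec hη hrec (k+1) n
    set y := sSeat η (k+1) n with hydef
    have h5 : xiSeat η (k+1) y = xiSeat (skip η 1) k ((xiSeat η 1 y).toNat) :=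
      xi_comp hη hrec k y
    have h6 : xiSeat (skip η 1) k ((xiSeat η 1 y).toNat) = (n:ℤ) := by rw [← h5, h4]
    have h7 : a ≤ (xiSeat η 1 y).toNat := Nat.sInf_le h6
    have h8 : xiSeat η 1 y ≤ xiSeat η 1 x' := xi_mono hη 1 (by omega)
    have h9 : xiSeat η 1 x' = (a : ℤ) := sSeat_spec hη hrec 1 a
    have h10 : xiSeat η 1 y = (a : ℤ) := by
      have := xi_nonneg hη 1 y
      omega
    have h11 : x' ≤ y := Nat.sInf_le h10
    omega

lemma skip_comp {η : ℕ → ℤ} (hη : Ze η) (hrec : Rec η) (k : ℕ) :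
    skip η (k+1) = skip (skip η 1) k := by
  funext n
  show η (sSeat η (k+1) n) = skip η 1 (sSeat (skip η 1) k n)
  rw [sSeat_comp hη hrec k n]
  rfl
/-! ### S8: helpers for the main induction -/

lemma kept_xi_step {η : ℕ → ℤ} (hη : Ze η) {x : ℕ} (hkept : η (x+1) = seatW η x 1) :
    xiSeat η 1 (x+1) = xiSeat η 1 x + 1 := by
  rw [xiSeat_succ, (ev1_zero_iff hη (x+1)).2 (by simpa using hkept)]
  ring

lemma edge_xi_step {η : ℕ → ℤ} (hη : Ze η) {x : ℕ} (hedge : η (x+1) ≠ seatW η x 1) :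
    xiSeat η 1 (x+1) = xiSeat η 1 x := by
  have h1 : evS η 1 (x+1) ≠ 0 := by
    intro h
    exact hedge (by simpa using (ev1_zero_iff hη (x+1)).1 h)
  rcases evS01 hη (show 1 ≤ x+1 by omega) 1 with h | h
  · exact absurd h h1
  · rw [xiSeat_succ, h]; ring

lemma kept_jump {η : ℕ → ℤ} (hη : Ze η) {x : ℕ} (hkept : η (x+1) = seatW η x 1) :
    sSeat η 1 ((xiSeat η 1 x).toNat + 1) = x + 1
    ∧ skip η 1 ((xiSeat η 1 x).toNat + 1) = η (x+1)
    ∧ (xiSeat η 1 (x+1)).toNat = (xiSeat η 1 x).toNat + 1 := by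
  have hnn := xi_nonneg hη 1 x
  have hst := kept_xi_step hη hkept
  have h1 : xiSeat η 1 (x+1) = (((xiSeat η 1 x).toNat + 1 : ℕ) : ℤ) := by push_cast; omega
  have hs : sSeat η 1 ((xiSeat η 1 x).toNat + 1) = x + 1 := by
    apply sSeat_eq_of_jump hη (by omega) h1
    simp only [Nat.add_sub_cancel]
    push_cast
    omega
  refine ⟨hs, ?_, by omega⟩
  show η (sSeat η 1 ((xiSeat η 1 x).toNat + 1)) = η (x+1)
  rw [hs]

/-! ### S9: the master invariant for the finite-capacity identity -/

lemma inv_all {η : ℕ → ℤ} (hη : Ze η) (hrec : Rec η) {ℓ : ℕ} (hℓ : 1 ≤ ℓ) (x : ℕ) :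
    carrier η ℓ x = carrier (skip η 1) (ℓ-1) ((xiSeat η 1 x).toNat) + seatW η x 1
    ∧ (seatW (tEvol η ℓ) x 1 = seatW η x 1 → xiSeat (tEvol η ℓ) 1 x = xiSeat η 1 x)
    ∧ (seatW (tEvol η ℓ) x 1 ≠ seatW η x 1 → xiSeat (tEvol η ℓ) 1 x = xiSeat η 1 x + 1)
    ∧ (1 ≤ x → seatW (tEvol η ℓ) x 1 = seatW η x 1 →
        tEvol η ℓ x = (if xiSeat η 1 x = 0 then 0
          else tEvol η ℓ (sSeat η 1 ((xiSeat η 1 x).toNat))))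
    ∧ (seatW η x 1 = 1 → seatW (tEvol η ℓ) x 1 = 1 → carrier η ℓ x = (ℓ:ℤ))
    ∧ (seatW η x 1 = 0 → seatW (tEvol η ℓ) x 1 = 0 → carrier η ℓ x = 0) := by
  have hG01 : Ze (tEvol η ℓ) := tEvol01 hη ℓ
  induction x with
  | zero =>
    refine ⟨?_, ?_, ?_, ?_, ?_, ?_⟩
    · rw [xi_zero]
      show (0:ℤ) = carrier (skip η 1) (ℓ-1) 0 + 0
      show (0:ℤ) = 0 + 0
      ring
    · intro _; rw [xi_zero, xi_zero]
    · intro h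
      exfalso
      exact h rfl
    · intro h; omega
    · intro h _
      exact absurd h (by rw [show seatW η 0 1 = 0 from rfl]; norm_num)
    · intro _ _; rfl
  | succ x ih =>
    obtain ⟨hA, hB1, hB2, hK, hN, hN2⟩ := ih
    have hcast : ((ℓ-1:ℕ):ℤ) = (ℓ:ℤ) - 1 := by omega
    have hc0 := carrier_nonneg η ℓ x
    have hcL := carrier_le η ℓ x
    have hd0 := carrier_nonneg (skip η 1) (ℓ-1) ((xiSeat η 1 x).toNat)
    have hdL : carrier (skip η 1) (ℓ-1) ((xiSeat η 1 x).toNat) ≤ (ℓ:ℤ) - 1 := by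
      have := carrier_le (skip η 1) (ℓ-1) ((xiSeat η 1 x).toNat)
      omega
    have hγval : tEvol η ℓ (x+1) = η (x+1) + carrier η ℓ x - carrier η ℓ (x+1) := by
      show η (x+1) + carrier η ℓ ((x+1)-1) - carrier η ℓ (x+1) = _
      simp only [Nat.add_sub_cancel]
    have hW1η : seatW η (x+1) 1 = η (x+1) := seatW_one η x
    have hW1G : seatW (tEvol η ℓ) (x+1) 1 = tEvol η ℓ (x+1) := seatW_one (tEvol η ℓ) x
    have hnn := xi_nonneg hη 1 x
    have hnnG := xi_nonneg hG01 1 x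
    rcases hη (x+1) with ha | ha
    · -- a = 0
      rcases seatW01 hη x 1 with hw | hw
      · -- w = 0 : kept for η ; p-carrier steps with input 0
        have hkept : η (x+1) = seatW η x 1 := by rw [ha, hw]
        obtain ⟨hs, hpval, htn⟩ := kept_jump hη hkept
        have hp0 : skip η 1 ((xiSeat η 1 x).toNat + 1) = 0 := by rw [hpval, ha]
        have hxiη := kept_xi_step hη hkept
        have hdstep : carrier (skip η 1) (ℓ-1) ((xiSeat η 1 x).toNat + 1)
            = if 0 < carrier (skip η 1) (ℓ-1) ((xiSeat η 1 x).toNat)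
              then carrier (skip η 1) (ℓ-1) ((xiSeat η 1 x).toNat) - 1
              else carrier (skip η 1) (ℓ-1) ((xiSeat η 1 x).toNat) := by
          by_cases hpos : 0 < carrier (skip η 1) (ℓ-1) ((xiSeat η 1 x).toNat)
          · rw [if_pos hpos, carrier_succ,
              if_neg (fun hcon => by rw [hp0] at hcon; exact absurd hcon.1 (by norm_num)),
              if_pos ⟨hp0, hpos⟩]
          · rw [if_neg hpos, carrier_succ,
              if_neg (fun hcon => by rw [hp0] at hcon; exact absurd hcon.1 (by norm_num)),
              if_neg (fun hcon => hpos hcon.2)]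
        rcases seatW01 hG01 x 1 with hg | hg
        · -- g = 0 : N2 gives c = 0
          have hc00 : carrier η ℓ x = 0 := hN2 hw hg
          have hdd0 : carrier (skip η 1) (ℓ-1) ((xiSeat η 1 x).toNat) = 0 := by omega
          have hc' : carrier η ℓ (x+1) = carrier η ℓ x := by
            rw [carrier_succ, if_neg (by rw [ha]; norm_num), if_neg (by omega)]
          have hG' : tEvol η ℓ (x+1) = 0 := by rw [hγval, ha, hc', hc00]; ring
          have hGkept : tEvol η ℓ (x+1) = seatW (tEvol η ℓ) x 1 := by rw [hG', hg]
          have hxiG := kept_xi_step hG01 hGkept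
          have hd' : carrier (skip η 1) (ℓ-1) ((xiSeat η 1 (x+1)).toNat)
              = carrier (skip η 1) (ℓ-1) ((xiSeat η 1 x).toNat) := by
            rw [htn, hdstep, if_neg (by omega)]
          refine ⟨?_, ?_, ?_, ?_, ?_, ?_⟩
          · rw [hc', hd', hW1η, ha, hc00, hdd0]; ring
          · intro _; rw [hxiG, hxiη, hB1 (by rw [hg, hw])]
          · intro hcon; exact absurd (by rw [hW1G, hW1η, hG', ha]) hcon
          · intro _ _
            rw [if_neg (by omega), htn, hs]
          · intro hcon; rw [hW1η, ha] at hcon; norm_num at hcon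
          · intro _ _; rw [hc', hc00]
        · -- g = 1 : B2 at x applies
          have hxiγx : xiSeat (tEvol η ℓ) 1 x = xiSeat η 1 x + 1 :=
            hB2 (by rw [hg, hw]; norm_num)
          by_cases hcpos : 0 < carrier η ℓ x
          · have hc' : carrier η ℓ (x+1) = carrier η ℓ x - 1 := by
              rw [carrier_succ, if_neg (by rw [ha]; norm_num), if_pos ⟨ha, hcpos⟩]
            have hG' : tEvol η ℓ (x+1) = 1 := by rw [hγval, ha, hc']; ring
            have hGkept : tEvol η ℓ (x+1) = seatW (tEvol η ℓ) x 1 := by rw [hG', hg]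
            have hxiG := kept_xi_step hG01 hGkept
            have hd' : carrier (skip η 1) (ℓ-1) ((xiSeat η 1 (x+1)).toNat)
                = carrier (skip η 1) (ℓ-1) ((xiSeat η 1 x).toNat) - 1 := by
              rw [htn, hdstep, if_pos (by omega)]
            refine ⟨?_, ?_, ?_, ?_, ?_, ?_⟩
            · rw [hc', hd', hW1η, ha]; omega
            · intro hcon; rw [hW1G, hW1η, hG', ha] at hcon; norm_num at hcon
            · intro _; rw [hxiG, hxiη, hxiγx]
            · intro _ hcon; rw [hW1G, hW1η, hG', ha] at hcon; norm_num at hcon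
            · intro hcon; rw [hW1η, ha] at hcon; norm_num at hcon
            · intro _ hcon; rw [hW1G, hG'] at hcon; norm_num at hcon
          · have hc00 : carrier η ℓ x = 0 := by omega
            have hdd0 : carrier (skip η 1) (ℓ-1) ((xiSeat η 1 x).toNat) = 0 := by omega
            have hc' : carrier η ℓ (x+1) = carrier η ℓ x := by
              rw [carrier_succ, if_neg (by rw [ha]; norm_num), if_neg (by omega)]
            have hG' : tEvol η ℓ (x+1) = 0 := by rw [hγval, ha, hc', hc00]; ring
            have hGedge : tEvol η ℓ (x+1) ≠ seatW (tEvol η ℓ) x 1 := by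
              rw [hG', hg]; norm_num
            have hxiG := edge_xi_step hG01 hGedge
            have hd' : carrier (skip η 1) (ℓ-1) ((xiSeat η 1 (x+1)).toNat)
                = carrier (skip η 1) (ℓ-1) ((xiSeat η 1 x).toNat) := by
              rw [htn, hdstep, if_neg (by omega)]
            refine ⟨?_, ?_, ?_, ?_, ?_, ?_⟩
            · rw [hc', hd', hW1η, ha, hc00, hdd0]; ring
            · intro _; rw [hxiG, hxiη, hxiγx]
            · intro hcon; exact absurd (by rw [hW1G, hW1η, hG', ha]) hcon
            · intro _ _
              rw [if_neg (by omega), htn, hs]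
            · intro hcon; rw [hW1η, ha] at hcon; norm_num at hcon
            · intro _ _; rw [hc', hc00]
      · -- a = 0, w = 1 : edge for η ; carrier drops
        have hedge : η (x+1) ≠ seatW η x 1 := by rw [ha, hw]; norm_num
        have hxiη := edge_xi_step hη hedge
        have htn : (xiSeat η 1 (x+1)).toNat = (xiSeat η 1 x).toNat := by rw [hxiη]
        have hcpos : 0 < carrier η ℓ x := by omega
        have hc' : carrier η ℓ (x+1) = carrier η ℓ x - 1 := by
          rw [carrier_succ, if_neg (by rw [ha]; norm_num), if_pos ⟨ha, hcpos⟩]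
        have hG' : tEvol η ℓ (x+1) = 1 := by rw [hγval, ha, hc']; ring
        have hd' : carrier (skip η 1) (ℓ-1) ((xiSeat η 1 (x+1)).toNat)
            = carrier (skip η 1) (ℓ-1) ((xiSeat η 1 x).toNat) := by rw [htn]
        refine ⟨?_, ?_, ?_, ?_, ?_, ?_⟩
        · rw [hc', hd', hW1η, ha]; omega
        · intro hcon; rw [hW1G, hW1η, hG', ha] at hcon; norm_num at hcon
        · intro _
          rcases seatW01 hG01 x 1 with hg | hg
          · have hGedge : tEvol η ℓ (x+1) ≠ seatW (tEvol η ℓ) x 1 := by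
              rw [hG', hg]; norm_num
            rw [edge_xi_step hG01 hGedge, hxiη, hB2 (by rw [hg, hw]; norm_num)]
          · have hGkept : tEvol η ℓ (x+1) = seatW (tEvol η ℓ) x 1 := by rw [hG', hg]
            rw [kept_xi_step hG01 hGkept, hxiη, hB1 (by rw [hg, hw])]
        · intro _ hcon; rw [hW1G, hW1η, hG', ha] at hcon; norm_num at hcon
        · intro hcon; rw [hW1η, ha] at hcon; norm_num at hcon
        · intro _ hcon; rw [hW1G, hG'] at hcon; norm_num at hcon
    · -- a = 1
      rcases seatW01 hη x 1 with hw | hw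
      · -- a = 1, w = 0 : edge for η ; carrier picks
        have hedge : η (x+1) ≠ seatW η x 1 := by rw [ha, hw]; norm_num
        have hxiη := edge_xi_step hη hedge
        have htn : (xiSeat η 1 (x+1)).toNat = (xiSeat η 1 x).toNat := by rw [hxiη]
        have hclt : carrier η ℓ x < (ℓ:ℤ) := by omega
        have hc' : carrier η ℓ (x+1) = carrier η ℓ x + 1 := by
          rw [carrier_succ, if_pos ⟨ha, hclt⟩]
        have hG' : tEvol η ℓ (x+1) = 0 := by rw [hγval, ha, hc']; ring
        have hd' : carrier (skip η 1) (ℓ-1) ((xiSeat η 1 (x+1)).toNat)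
            = carrier (skip η 1) (ℓ-1) ((xiSeat η 1 x).toNat) := by rw [htn]
        refine ⟨?_, ?_, ?_, ?_, ?_, ?_⟩
        · rw [hc', hd', hW1η, ha]; omega
        · intro hcon; rw [hW1G, hW1η, hG', ha] at hcon; norm_num at hcon
        · intro _
          rcases seatW01 hG01 x 1 with hg | hg
          · have hGkept : tEvol η ℓ (x+1) = seatW (tEvol η ℓ) x 1 := by rw [hG', hg]
            rw [kept_xi_step hG01 hGkept, hxiη, hB1 (by rw [hg, hw])]
          · have hGedge : tEvol η ℓ (x+1) ≠ seatW (tEvol η ℓ) x 1 := by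
              rw [hG', hg]; norm_num
            rw [edge_xi_step hG01 hGedge, hxiη, hB2 (by rw [hg, hw]; norm_num)]
        · intro _ hcon; rw [hW1G, hW1η, hG', ha] at hcon; norm_num at hcon
        · intro _ hcon; rw [hW1G, hG'] at hcon; norm_num at hcon
        · intro hcon; rw [hW1η, ha] at hcon; norm_num at hcon
      · -- a = 1, w = 1 : kept for η ; p-carrier steps with input 1
        have hkept : η (x+1) = seatW η x 1 := by rw [ha, hw]
        obtain ⟨hs, hpval, htn⟩ := kept_jump hη hkept
        have hp1 : skip η 1 ((xiSeat η 1 x).toNat + 1) = 1 := by rw [hpval, ha]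
        have hxiη := kept_xi_step hη hkept
        have hdstep : carrier (skip η 1) (ℓ-1) ((xiSeat η 1 x).toNat + 1)
            = if carrier (skip η 1) (ℓ-1) ((xiSeat η 1 x).toNat) < (ℓ:ℤ) - 1
              then carrier (skip η 1) (ℓ-1) ((xiSeat η 1 x).toNat) + 1
              else carrier (skip η 1) (ℓ-1) ((xiSeat η 1 x).toNat) := by
          by_cases hlt : carrier (skip η 1) (ℓ-1) ((xiSeat η 1 x).toNat) < (ℓ:ℤ) - 1
          · rw [if_pos hlt, carrier_succ, if_pos ⟨hp1, by rw [hcast]; exact hlt⟩]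
          · rw [if_neg hlt, carrier_succ,
              if_neg (fun hcon => hlt (by rw [hcast] at hcon; exact hcon.2)),
              if_neg (fun hcon => by rw [hp1] at hcon; exact absurd hcon.1 (by norm_num))]
        rcases seatW01 hG01 x 1 with hg | hg
        · -- g = 0
          by_cases hclt : carrier η ℓ x < (ℓ:ℤ)
          · have hc' : carrier η ℓ (x+1) = carrier η ℓ x + 1 := by
              rw [carrier_succ, if_pos ⟨ha, hclt⟩]
            have hG' : tEvol η ℓ (x+1) = 0 := by rw [hγval, ha, hc']; ring
            have hGkept : tEvol η ℓ (x+1) = seatW (tEvol η ℓ) x 1 := by rw [hG', hg]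
            have hxiG := kept_xi_step hG01 hGkept
            have hd' : carrier (skip η 1) (ℓ-1) ((xiSeat η 1 (x+1)).toNat)
                = carrier (skip η 1) (ℓ-1) ((xiSeat η 1 x).toNat) + 1 := by
              rw [htn, hdstep, if_pos (by omega)]
            refine ⟨?_, ?_, ?_, ?_, ?_, ?_⟩
            · rw [hc', hd', hW1η, ha]; omega
            · intro hcon; rw [hW1G, hW1η, hG', ha] at hcon; norm_num at hcon
            · intro _
              rw [hxiG, hxiη, hB2 (by rw [hg, hw]; norm_num)]
            · intro _ hcon; rw [hW1G, hW1η, hG', ha] at hcon; norm_num at hcon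
            · intro _ hcon; rw [hW1G, hG'] at hcon; norm_num at hcon
            · intro hcon; rw [hW1η, ha] at hcon; norm_num at hcon
          · have hceq : carrier η ℓ x = (ℓ:ℤ) := by omega
            have hc' : carrier η ℓ (x+1) = carrier η ℓ x := by
              rw [carrier_succ, if_neg (fun hcon => hclt hcon.2),
                if_neg (fun hcon => by rw [ha] at hcon; exact absurd hcon.1 (by norm_num))]
            have hG' : tEvol η ℓ (x+1) = 1 := by rw [hγval, ha, hc']; ring
            have hGedge : tEvol η ℓ (x+1) ≠ seatW (tEvol η ℓ) x 1 := by
              rw [hG', hg]; norm_num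
            have hxiG := edge_xi_step hG01 hGedge
            have hd' : carrier (skip η 1) (ℓ-1) ((xiSeat η 1 (x+1)).toNat)
                = carrier (skip η 1) (ℓ-1) ((xiSeat η 1 x).toNat) := by
              rw [htn, hdstep, if_neg (by omega)]
            refine ⟨?_, ?_, ?_, ?_, ?_, ?_⟩
            · rw [hc', hd', hW1η, ha]; omega
            · intro _
              rw [hxiG, hxiη, hB2 (by rw [hg, hw]; norm_num)]
            · intro hcon; exact absurd (by rw [hW1G, hW1η, hG', ha]) hcon
            · intro _ _
              rw [if_neg (by omega), htn, hs]
            · intro _ _; rw [hc', hceq]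
            · intro hcon; rw [hW1η, ha] at hcon; norm_num at hcon
        · -- g = 1 : N gives c = ℓ
          have hceq : carrier η ℓ x = (ℓ:ℤ) := hN hw hg
          have hc' : carrier η ℓ (x+1) = carrier η ℓ x := by
            rw [carrier_succ, if_neg (fun hcon => by rw [hceq] at hcon; exact absurd hcon.2 (by norm_num)),
              if_neg (fun hcon => by rw [ha] at hcon; exact absurd hcon.1 (by norm_num))]
          have hG' : tEvol η ℓ (x+1) = 1 := by rw [hγval, ha, hc']; ring
          have hGkept : tEvol η ℓ (x+1) = seatW (tEvol η ℓ) x 1 := by rw [hG', hg]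
          have hxiG := kept_xi_step hG01 hGkept
          have hd' : carrier (skip η 1) (ℓ-1) ((xiSeat η 1 (x+1)).toNat)
              = carrier (skip η 1) (ℓ-1) ((xiSeat η 1 x).toNat) := by
            rw [htn, hdstep, if_neg (by omega)]
          refine ⟨?_, ?_, ?_, ?_, ?_, ?_⟩
          · rw [hc', hd', hW1η, ha]; omega
          · intro _; rw [hxiG, hxiη, hB1 (by rw [hg, hw])]
          · intro hcon; exact absurd (by rw [hW1G, hW1η, hG', ha]) hcon
          · intro _ _
            rw [if_neg (by omega), htn, hs]
          · intro _ _; rw [hc', hceq]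
          · intro hcon; rw [hW1η, ha] at hcon; norm_num at hcon
/-! ### S10: the finite-capacity identity Ψ₁(T_ℓ η) = shift (T_{ℓ-1} Ψ₁η) -/

lemma seatW_one' (ρ : ℕ → ℤ) {y : ℕ} (hy : 1 ≤ y) : seatW ρ y 1 = ρ y := by
  obtain ⟨z, rfl⟩ : ∃ z, y = z + 1 := ⟨y-1, by omega⟩
  exact seatW_one ρ z

lemma rho_eq {η : ℕ → ℤ} (hη : Ze η) (hrec : Rec η) {ℓ : ℕ} (hℓ : 1 ≤ ℓ)
    {i : ℕ} (hi : 1 ≤ i) :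
    tEvol (skip η 1) (ℓ-1) i = tEvol η ℓ (sSeat η 1 i) := by
  have hx1 : 1 ≤ sSeat η 1 i := sSeat_pos hη hrec hi
  have hxv : xiSeat η 1 (sSeat η 1 i) = (i:ℤ) := sSeat_spec hη hrec 1 i
  have hxp : xiSeat η 1 (sSeat η 1 i - 1) = (i:ℤ) - 1 := sSeat_pred hη hrec 1 hi
  have hkept : η (sSeat η 1 i) = seatW η (sSeat η 1 i - 1) 1 := kept_at_sSeat hη hrec hi
  obtain ⟨hAx, -, -, -, -, -⟩ := inv_all hη hrec hℓ (sSeat η 1 i)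
  obtain ⟨hAx1, -, -, -, -, -⟩ := inv_all hη hrec hℓ (sSeat η 1 i - 1)
  have htn1 : (xiSeat η 1 (sSeat η 1 i)).toNat = i := by omega
  have htn2 : (xiSeat η 1 (sSeat η 1 i - 1)).toNat = i - 1 := by omega
  rw [htn1] at hAx
  rw [htn2] at hAx1
  have hWx : seatW η (sSeat η 1 i) 1 = η (sSeat η 1 i) := seatW_one' η hx1
  have hρ : tEvol (skip η 1) (ℓ-1) i
      = skip η 1 i + carrier (skip η 1) (ℓ-1) (i-1) - carrier (skip η 1) (ℓ-1) i := rfl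
  have hγ : tEvol η ℓ (sSeat η 1 i)
      = η (sSeat η 1 i) + carrier η ℓ (sSeat η 1 i - 1) - carrier η ℓ (sSeat η 1 i) := rfl
  have hpv : skip η 1 i = η (sSeat η 1 i) := rfl
  rw [hρ, hγ, hpv]
  rw [hWx] at hAx
  rw [← hkept] at hAx1
  omega

lemma gamma_kept {η : ℕ → ℤ} (hη : Ze η) (hrec : Rec η) {ℓ : ℕ} (hℓ : 1 ≤ ℓ)
    {n : ℕ} (hn : 1 ≤ n) :
    tEvol η ℓ (sSeat (tEvol η ℓ) 1 n)
      = if n = 1 then 0 else tEvol η ℓ (sSeat η 1 (n-1)) := by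
  have hG01 : Ze (tEvol η ℓ) := tEvol01 hη ℓ
  have hGrec : Rec (tEvol η ℓ) := Rec_tEvol hη hrec ℓ
  have hx1 : 1 ≤ sSeat (tEvol η ℓ) 1 n := sSeat_pos hG01 hGrec hn
  have hxv : xiSeat (tEvol η ℓ) 1 (sSeat (tEvol η ℓ) 1 n) = (n:ℤ) := sSeat_spec hG01 hGrec 1 n
  have hxp : xiSeat (tEvol η ℓ) 1 (sSeat (tEvol η ℓ) 1 n - 1) = (n:ℤ) - 1 :=
    sSeat_pred hG01 hGrec 1 hn
  have hGkept : tEvol η ℓ (sSeat (tEvol η ℓ) 1 n)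
      = seatW (tEvol η ℓ) (sSeat (tEvol η ℓ) 1 n - 1) 1 := kept_at_sSeat hG01 hGrec hn
  set y := sSeat (tEvol η ℓ) 1 n - 1 with hydef
  have hyx : y + 1 = sSeat (tEvol η ℓ) 1 n := by omega
  rw [← hyx] at hxv hGkept ⊢
  have hxGy : xiSeat (tEvol η ℓ) 1 y = (n:ℤ) - 1 := hxp
  obtain ⟨-, hB1y, hB2y, hKy, -, -⟩ := inv_all hη hrec hℓ y
  obtain ⟨-, hB1y1, hB2y1, -, -, -⟩ := inv_all hη hrec hℓ (y+1)
  have hW1G1 : seatW (tEvol η ℓ) (y+1) 1 = tEvol η ℓ (y+1) := seatW_one _ y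
  have hW1η1 : seatW η (y+1) 1 = η (y+1) := seatW_one η y
  have hnnηy := xi_nonneg hη 1 y
  have hnnηy1 := xi_nonneg hη 1 (y+1)
  -- the "inherited" ending through the K invariant at y
  have ending : xiSeat η 1 y = (n:ℤ) - 1 → seatW (tEvol η ℓ) y 1 = seatW η y 1 →
      tEvol η ℓ (y+1) = (if n = 1 then 0 else tEvol η ℓ (sSeat η 1 (n-1))) := by
    intro hyval hDy
    rcases Nat.lt_or_ge y 1 with hy0 | hy1
    · have hy00 : y = 0 := by omega
      have hn1 : n = 1 := by rw [hy00, xi_zero] at hyval; omega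
      rw [if_pos hn1, hGkept, hy00]
      rfl
    · have hGy1 : tEvol η ℓ (y+1) = tEvol η ℓ y := by
        rw [hGkept, seatW_one' _ hy1]
      have hK := hKy hy1 hDy
      by_cases hn1 : n = 1
      · rw [if_pos hn1]
        rw [if_pos (by omega : xiSeat η 1 y = 0)] at hK
        rw [hGy1, hK]
      · rw [if_neg hn1]
        rw [if_neg (by omega : ¬ xiSeat η 1 y = 0)] at hK
        have htn : (xiSeat η 1 y).toNat = n - 1 := by omega
        rw [htn] at hK
        rw [hGy1, hK]
  by_cases hD1 : seatW (tEvol η ℓ) (y+1) 1 = seatW η (y+1) 1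
  · -- D(y+1) = 0 : y+1 must be an η-kept site
    have hn' : xiSeat η 1 (y+1) = (n:ℤ) := by rw [← hB1y1 hD1]; exact hxv
    have hDyB : xiSeat (tEvol η ℓ) 1 y = xiSeat η 1 y
        ∨ xiSeat (tEvol η ℓ) 1 y = xiSeat η 1 y + 1 := by
      by_cases h : seatW (tEvol η ℓ) y 1 = seatW η y 1
      · exact Or.inl (hB1y h)
      · exact Or.inr (hB2y h)
    have hηk : η (y+1) = seatW η y 1 := by
      by_contra hcon
      have hsame := edge_xi_step hη hcon
      omega
    have hjump := kept_xi_step hη hηk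
    have hyval : xiSeat η 1 y = (n:ℤ) - 1 := by omega
    have hDy : seatW (tEvol η ℓ) y 1 = seatW η y 1 := by
      by_contra hcon
      have := hB2y hcon
      omega
    exact ending hyval hDy
  · -- D(y+1) = 1
    have hn' : xiSeat η 1 (y+1) = (n:ℤ) - 1 := by
      have := hB2y1 hD1
      omega
    by_cases hηk : η (y+1) = seatW η y 1
    · -- η-kept at y+1 : the target site is y+1 itself
      obtain ⟨hs, -, -⟩ := kept_jump hη hηk
      have hstep := kept_xi_step hη hηk
      have hnge2 : 2 ≤ n := by omega
      rw [if_neg (by omega)]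
      have htn : (xiSeat η 1 y).toNat + 1 = n - 1 := by omega
      rw [show sSeat η 1 (n-1) = y + 1 from by rw [← htn]; exact hs]
    · -- η-edge at y+1
      have hstep := edge_xi_step hη hηk
      have hyval : xiSeat η 1 y = (n:ℤ) - 1 := by omega
      have hDy : seatW (tEvol η ℓ) y 1 = seatW η y 1 := by
        by_contra hcon
        have := hB2y hcon
        omega
      exact ending hyval hDy

/-- identity (II''): Ψ₁(T_ℓ η) = shift (T_{ℓ-1} (Ψ₁ η)). -/
lemma skip1_tEvol {η : ℕ → ℤ} (hη : Ze η) (hrec : Rec η) {ℓ : ℕ} (hℓ : 1 ≤ ℓ) :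
    skip (tEvol η ℓ) 1 = shiftF (tEvol (skip η 1) (ℓ-1)) := by
  have hG01 : Ze (tEvol η ℓ) := tEvol01 hη ℓ
  funext n
  match n with
  | 0 =>
    show tEvol η ℓ (sSeat (tEvol η ℓ) 1 0) = tEvol (skip η 1) (ℓ-1) 0
    rw [sSeat_zero]
    show η 0 + carrier η ℓ 0 - carrier η ℓ 0
      = skip η 1 0 + carrier (skip η 1) (ℓ-1) 0 - carrier (skip η 1) (ℓ-1) 0
    show η 0 + carrier η ℓ 0 - carrier η ℓ 0
      = η (sSeat η 1 0) + carrier (skip η 1) (ℓ-1) 0 - carrier (skip η 1) (ℓ-1) 0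
    rw [sSeat_zero]
    ring
  | 1 =>
    show tEvol η ℓ (sSeat (tEvol η ℓ) 1 1) = if (1:ℕ) = 0 then _ else if (1:ℕ) = 1 then 0 else _
    rw [if_neg one_ne_zero, if_pos rfl, gamma_kept hη hrec hℓ le_rfl, if_pos rfl]
  | (m+2) =>
    show tEvol η ℓ (sSeat (tEvol η ℓ) 1 (m+2)) = shiftF (tEvol (skip η 1) (ℓ-1)) (m+2)
    rw [gamma_kept hη hrec hℓ (by omega), if_neg (by omega)]
    show tEvol η ℓ (sSeat η 1 (m+2-1)) = shiftF (tEvol (skip η 1) (ℓ-1)) (m+2)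
    rw [show (m+2-1 : ℕ) = m+1 from rfl]
    rw [← rho_eq hη hrec hℓ (show 1 ≤ m+1 by omega)]
    unfold shiftF
    rw [if_neg (by omega), if_neg (by omega)]
    rfl
/-! ### S11: truncation and the infinite-capacity identity -/

lemma seatW_congr {ρ ρ' : ℕ → ℤ} {x : ℕ} (h : ∀ y, y ≤ x → ρ y = ρ' y) (k : ℕ) :
    seatW ρ x k = seatW ρ' x k := by
  induction x generalizing k with
  | zero => rfl
  | succ x ih =>
    have ih' : ∀ k', seatW ρ x k' = seatW ρ' x k' := fun k' => ih (fun y hy => h y (by omega)) k'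
    have hP : (∏ m ∈ Finset.Ico 1 k, seatW ρ x m) = ∏ m ∈ Finset.Ico 1 k, seatW ρ' x m :=
      Finset.prod_congr rfl (fun m _ => ih' m)
    have hQ : (∏ m ∈ Finset.Ico 1 k, (1 - seatW ρ x m))
        = ∏ m ∈ Finset.Ico 1 k, (1 - seatW ρ' x m) :=
      Finset.prod_congr rfl (fun m _ => by rw [ih' m])
    rw [seatW, seatW, h (x+1) le_rfl, ih' k, hP, hQ]

lemma evS_congr {ρ ρ' : ℕ → ℤ} {x : ℕ} (h : ∀ y, y ≤ x → ρ y = ρ' y) (k : ℕ) :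
    evS ρ k x = evS ρ' k x := by
  apply Finset.sum_congr rfl
  intro m _
  unfold seatUp seatDown
  have hW : ∀ j, seatW ρ (x-1) j = seatW ρ' (x-1) j :=
    fun j => seatW_congr (fun y hy => h y (by omega)) j
  have hP : (∏ j ∈ Finset.Ico 1 m, seatW ρ (x-1) j)
      = ∏ j ∈ Finset.Ico 1 m, seatW ρ' (x-1) j :=
    Finset.prod_congr rfl (fun j _ => hW j)
  have hQ : (∏ j ∈ Finset.Ico 1 m, (1 - seatW ρ (x-1) j))
      = ∏ j ∈ Finset.Ico 1 m, (1 - seatW ρ' (x-1) j) :=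
    Finset.prod_congr rfl (fun j _ => by rw [hW j])
  rw [h x le_rfl, hW m, hP, hQ]

lemma xi_congr {ρ ρ' : ℕ → ℤ} {M : ℕ} (h : ∀ y, y ≤ M → ρ y = ρ' y) (k : ℕ)
    {x : ℕ} (hx : x ≤ M) : xiSeat ρ k x = xiSeat ρ' k x := by
  rw [xiSeat_eq, xiSeat_eq]
  congr 1
  apply Finset.sum_congr rfl
  intro y hy
  simp only [Finset.mem_Icc] at hy
  exact evS_congr (fun z hz => h z (by omega)) k

lemma sSeat_congr {ρ ρ' : ℕ → ℤ} {M : ℕ} (h : ∀ y, y ≤ M → ρ y = ρ' y) (k i : ℕ)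
    (hle : sSeat ρ k i ≤ M) (hmem : xiSeat ρ k (sSeat ρ k i) = (i:ℤ)) :
    sSeat ρ' k i = sSeat ρ k i := by
  have hmem' : xiSeat ρ' k (sSeat ρ k i) = (i:ℤ) := by
    rw [← xi_congr h k hle]; exact hmem
  apply le_antisymm
  · exact Nat.sInf_le hmem'
  · by_contra hcon
    push_neg at hcon
    have h4 : xiSeat ρ' k (sSeat ρ' k i) = (i : ℤ) :=
      Nat.sInf_mem (s := {x : ℕ | xiSeat ρ' k x = (i : ℤ)}) ⟨_, hmem'⟩
    have h5 : xiSeat ρ k (sSeat ρ' k i) = (i : ℤ) := by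
      rw [xi_congr h k (by omega)]; exact h4
    exact absurd h5 (sSeat_min ρ k i hcon)

/-- identity (I''): Ψ₁(T_∞ η) = shift (T_∞ (Ψ₁ η)). -/
lemma skip1_tEvolInf {η : ℕ → ℤ} (hη : Ze η) (hrec : Rec η) :
    skip (tEvolInf η) 1 = shiftF (tEvolInf (skip η 1)) := by
  have hA01 : Ze (tEvolInf η) := tEvolInf01 hη
  have hArec : Rec (tEvolInf η) := Rec_tEvolInf hη hrec
  have hp01 : Ze (skip η 1) := skip01 hη 1
  funext n
  set X := sSeat (tEvolInf η) 1 n with hXdef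
  set L := X + n + 2 with hLdef
  have hagree : ∀ y, y ≤ L → tEvol η L y = tEvolInf η y :=
    fun y hy => tEvol_eq_tEvolInf hη hy
  have hXmem : xiSeat (tEvolInf η) 1 X = (n:ℤ) := sSeat_spec hA01 hArec 1 n
  have hXmem2 : xiSeat (tEvol η L) 1 X = (n:ℤ) := by
    rw [xi_congr hagree 1 (show X ≤ L by omega)]; exact hXmem
  have hs' : sSeat (tEvol η L) 1 n = X := by
    apply sSeat_congr (fun y hy => (hagree y hy).symm) 1 n (by omega)
    exact hXmem
  have hfin := skip1_tEvol hη hrec (show 1 ≤ L by omega)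
  have hfin' : skip (tEvol η L) 1 n = shiftF (tEvol (skip η 1) (L-1)) n := by
    rw [hfin]
  have hLHS : skip (tEvolInf η) 1 n = skip (tEvol η L) 1 n := by
    show tEvolInf η X = tEvol η L (sSeat (tEvol η L) 1 n)
    rw [hs', hagree X (by omega)]
  rw [hLHS, hfin']
  unfold shiftF
  rcases Nat.eq_zero_or_pos n with h0 | hpos
  · subst h0
    simp only [if_pos rfl]
    show tEvol (skip η 1) (L-1) 0 = tEvolInf (skip η 1) 0
    exact tEvol_eq_tEvolInf hp01 (by omega)
  · rcases Nat.eq_or_lt_of_le hpos with h1 | h1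
    · rw [← h1]
      norm_num
    · rw [if_neg (by omega), if_neg (by omega), if_neg (by omega), if_neg (by omega)]
      exact tEvol_eq_tEvolInf hp01 (by omega)

/-! ### S12: assembly -/

lemma tEvolInf_shiftF {σ : ℕ → ℤ} (hσ : Ze σ) :
    tEvolInf (shiftF σ) = shiftF (tEvolInf σ) := by
  have hc1 : carrierInf (shiftF σ) 1 = 0 := by
    have e := carrierInf_succ (shiftF σ) 0
    rw [e, if_neg (by rw [show shiftF σ (0+1) = 0 from rfl]; norm_num)]
    show max ((0:ℤ) - 1) 0 = 0
    norm_num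
  have hckey : ∀ x, carrierInf (shiftF σ) (x+1) = carrierInf σ x := by
    intro x
    induction x with
    | zero => rw [hc1]; rfl
    | succ x ih =>
      have e1 := carrierInf_succ (shiftF σ) (x+1)
      have e2 := carrierInf_succ σ x
      have hval : shiftF σ (x+1+1) = σ (x+1) := by
        unfold shiftF
        rw [if_neg (by omega), if_neg (by omega)]
        rfl
      rw [e1, ih, e2, hval]
  funext y
  match y with
  | 0 =>
    show shiftF σ 0 + carrierInf (shiftF σ) 0 - carrierInf (shiftF σ) 0 = _
    show shiftF σ 0 + (0:ℤ) - 0 = shiftF (tEvolInf σ) 0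
    show σ 0 + (0:ℤ) - 0 = tEvolInf σ 0
    show σ 0 + (0:ℤ) - 0 = σ 0 + carrierInf σ 0 - carrierInf σ 0
    ring
  | 1 =>
    show shiftF σ 1 + carrierInf (shiftF σ) 0 - carrierInf (shiftF σ) 1 = shiftF (tEvolInf σ) 1
    rw [hc1, show shiftF σ 1 = 0 from rfl, show shiftF (tEvolInf σ) 1 = 0 from rfl]
    show (0:ℤ) + 0 - 0 = 0
    ring
  | (x+2) =>
    show shiftF σ (x+2) + carrierInf (shiftF σ) (x+1) - carrierInf (shiftF σ) (x+2)
      = shiftF (tEvolInf σ) (x+2)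
    rw [hckey x, hckey (x+1)]
    have hval : shiftF σ (x+2) = σ (x+1) := by
      unfold shiftF
      rw [if_neg (by omega), if_neg (by omega)]
      rfl
    have hval2 : shiftF (tEvolInf σ) (x+2) = tEvolInf σ (x+1) := by
      unfold shiftF
      rw [if_neg (by omega), if_neg (by omega)]
      rfl
    rw [hval, hval2]
    show σ (x+1) + carrierInf σ x - carrierInf σ (x+1)
      = σ (x+1) + carrierInf σ ((x+1)-1) - carrierInf σ (x+1)
    rw [show ((x+1)-1 : ℕ) = x from rfl]

lemma part1 : ∀ (k : ℕ) {η : ℕ → ℤ}, Ze η → Rec η →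
    skip (tEvol η 1) k = tEvol (skip η k) 1 := by
  intro k
  induction k with
  | zero =>
    intro η hη hrec
    rw [skip_k0, skip_k0]
  | succ k ih =>
    intro η hη hrec
    have h1 : skip (tEvol η 1) (k+1) = skip (skip (tEvol η 1) 1) k :=
      skip_comp (tEvol01 hη 1) (Rec_tEvol hη hrec 1) k
    have h2 : skip (tEvol η 1) 1 = tEvol (skip η 1) 1 := by
      rw [skip1_tEvol hη hrec le_rfl]
      rw [show (1-1 : ℕ) = 0 from rfl, tEvol_cap0]
      rw [tEvol_one_eq_shiftF (skip01 hη 1)]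
    rw [h1, h2, ih (skip01 hη 1) (Rec_skip1 hη hrec),
      ← skip_comp hη hrec k]

lemma part2 : ∀ (k : ℕ) {η : ℕ → ℤ}, Ze η → Rec η →
    skip (tEvolInf η) k = tEvolInf (skip (tEvol η k) k) := by
  intro k
  induction k with
  | zero =>
    intro η hη hrec
    rw [skip_k0, tEvol_cap0, skip_k0]
  | succ k ih =>
    intro η hη hrec
    have hp01 : Ze (skip η 1) := skip01 hη 1
    have hprec : Rec (skip η 1) := Rec_skip1 hη hrec
    -- LHS
    have h1 : skip (tEvolInf η) (k+1) = skip (skip (tEvolInf η) 1) k :=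
      skip_comp (tEvolInf01 hη) (Rec_tEvolInf hη hrec) k
    have h2 : skip (tEvolInf η) 1 = tEvol (tEvolInf (skip η 1)) 1 := by
      rw [skip1_tEvolInf hη hrec, tEvol_one_eq_shiftF (tEvolInf01 hp01)]
    have h3 : skip (tEvol (tEvolInf (skip η 1)) 1) k
        = tEvol (skip (tEvolInf (skip η 1)) k) 1 :=
      part1 k (tEvolInf01 hp01) (Rec_tEvolInf hp01 hprec)
    have h4 : skip (tEvolInf (skip η 1)) k
        = tEvolInf (skip (tEvol (skip η 1) k) k) := ih hp01 hprec
    -- RHS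
    have h5 : skip (tEvol η (k+1)) (k+1) = skip (skip (tEvol η (k+1)) 1) k :=
      skip_comp (tEvol01 hη (k+1)) (Rec_tEvol hη hrec (k+1)) k
    have h6 : skip (tEvol η (k+1)) 1 = tEvol (tEvol (skip η 1) k) 1 := by
      rw [skip1_tEvol hη hrec (show 1 ≤ k+1 by omega),
        show (k+1-1 : ℕ) = k from rfl,
        tEvol_one_eq_shiftF (tEvol01 hp01 k)]
    have h7 : skip (tEvol (tEvol (skip η 1) k) 1) k
        = tEvol (skip (tEvol (skip η 1) k) k) 1 :=
      part1 k (tEvol01 hp01 k) (Rec_tEvol hp01 hprec k)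
    have h8 : tEvolInf (tEvol (skip (tEvol (skip η 1) k) k) 1)
        = tEvol (tEvolInf (skip (tEvol (skip η 1) k) k)) 1 := by
      rw [tEvol_one_eq_shiftF (skip01 (tEvol01 hp01 k) k),
        tEvolInf_shiftF (skip01 (tEvol01 hp01 k) k),
        tEvol_one_eq_shiftF (tEvolInf01 (skip01 (tEvol01 hp01 k) k))]
    rw [h1, h2, h3, h4, h5, h6, h7, h8]

/-- for configurations with infinitely many records, the k-skip map
commutes with the BBS(1) evolution, and intertwines with the BBS(∞) evolution via T_k. -/
theorem skip_commutes_with_T (η : ℕ → ℤ) (hη : ∀ x, η x = 0 ∨ η x = 1)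
    (hrec : ∀ N : ℕ, ∃ x, N ≤ x ∧ recordInd η x = 1)
    (k : ℕ) (hk : 1 ≤ k) :
    skip (tEvol η 1) k = tEvol (skip η k) 1 ∧
    skip (tEvolInf η) k = tEvolInf (skip (tEvol η k) k) := by
  exact ⟨part1 k hη hrec, part2 k hη hrec⟩
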